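/- arXiv:2504.07045 — 6 statements merged into one kernel-verified Lean document; each statement's English description precedes it below -/
import Mathlib

section
/- Let S = K[x1,...,xn] and let I ⊆ S be a monomial ideal. Then for every s ≥ 1, the s-th symbolic power of I (defined as the intersection of I^s S_P ∩ S over minimal primes P of I) equals the intersection of Q(P)^s over minimal primes P, where Q(P) is the primary component of I corresponding to P. -/
set_option synthInstance.maxHeartbeats 1000000
set_option maxHeartbeats 1000000

open MvPolynomial

section Defs

variable {K : Type*} [Field K] {σ : Type*}

/-- `I` is a monomial ideal. -/
def IsMonomialIdeal (I : Ideal (MvPolynomial σ K)) : Prop :=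
  ∃ A : Set (σ →₀ ℕ), I = Ideal.span ((fun a => (monomial a (1 : K) : MvPolynomial σ K)) '' A)

/-- Exponent vectors of the minimal monomial generators of `I`. -/
def minGens (I : Ideal (MvPolynomial σ K)) : Set (σ →₀ ℕ) :=
  {a | (monomial a (1 : K) : MvPolynomial σ K) ∈ I ∧
    ∀ b : σ →₀ ℕ, (monomial b (1 : K) : MvPolynomial σ K) ∈ I → b ≤ a → b = a}

/-- A support-2 monomial ideal: every minimal monomial generator is supported
on exactly two variables. -/
def IsSupportTwo (I : Ideal (MvPolynomial σ K)) : Prop :=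
  ∀ a ∈ minGens I, a.support.card = 2

variable [DecidableEq σ]

/-- Minimal monomial generators of `I` supported on `{i, j}`. -/
def supportedOn (I : Ideal (MvPolynomial σ K)) (i j : σ) : Set (σ →₀ ℕ) :=
  {a | a ∈ minGens I ∧ a.support = {i, j}}

/-- `ν_{i,j}`: the minimum exponent of `x_i` among the minimal generators of `I`
supported on `{i, j}`. -/
noncomputable def nuExp (I : Ideal (MvPolynomial σ K)) (i j : σ) : ℕ :=
  sInf ((fun a => a i) '' supportedOn I i j)

/-- `μ_{i,j}`: the maximum exponent of `x_i` among the minimal generators of `I`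
supported on `{i, j}`. -/
noncomputable def muExp (I : Ideal (MvPolynomial σ K)) (i j : σ) : ℕ :=
  sSup ((fun a => a i) '' supportedOn I i j)

/-- The underlying simple graph `G(I)` of a support-2 monomial ideal. -/
def underGraph (I : Ideal (MvPolynomial σ K)) : SimpleGraph σ where
  Adj i j := i ≠ j ∧ (supportedOn I i j).Nonempty
  symm := ⟨by
    rintro i j ⟨hij, a, hmin, hs⟩
    exact ⟨hij.symm, a, hmin, by rw [hs, Finset.pair_comm]⟩⟩
  loopless := ⟨fun i h => h.1 rfl⟩

end Defs

section Symbolic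

variable {R : Type*} [CommRing R]

/-- The component of `I` at a prime `P`, namely `I S_P ∩ S`. -/
noncomputable def localizedComponent (I P : Ideal R) (hP : P.IsPrime) : Ideal R :=
  letI := hP
  (I.map (algebraMap R (Localization.AtPrime P))).comap
    (algebraMap R (Localization.AtPrime P))

/-- The `s`-th symbolic power `I^{(s)} = ⋂_{P ∈ MinAss(I)} (I^s S_P ∩ S)`. -/
noncomputable def symbolicPower (I : Ideal R) (s : ℕ) : Ideal R :=
  ⨅ P : I.minimalPrimes, localizedComponent (I ^ s) P.1 P.2.1.1

/-- A Simis ideal: `I^{(s)} = I^s` for all `s ≥ 1`. -/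
def IsSimis (I : Ideal R) : Prop := ∀ s : ℕ, 1 ≤ s → symbolicPower I s = I ^ s

/-- `I` has no embedded associated primes. -/
def NoEmbeddedPrimes (I : Ideal R) : Prop :=
  ∀ P ∈ associatedPrimes R (R ⧸ I), P ∈ I.minimalPrimes

end Symbolic

section Decomp

variable {K : Type*} [Field K] {σ : Type*}

/-- An irreducible monomial ideal: generated by pure powers of variables. -/
def IsIrredMonomialIdeal (Q : Ideal (MvPolynomial σ K)) : Prop :=
  ∃ (t : Finset σ) (e : σ → ℕ), (∀ i ∈ t, 1 ≤ e i) ∧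
    Q = Ideal.span ((fun i => (X i : MvPolynomial σ K) ^ e i) '' t)

/-- `I` has a minimal (irredundant, distinct radicals) irreducible decomposition. -/
def HasMinimalIrredDecomp (I : Ideal (MvPolynomial σ K)) : Prop :=
  ∃ (r : ℕ) (Q : Fin r → Ideal (MvPolynomial σ K)),
    (∀ k, IsIrredMonomialIdeal (Q k)) ∧ I = ⨅ k, Q k ∧
    (∀ k, (⨅ l ∈ ({k}ᶜ : Set (Fin r)), Q l) ≠ I) ∧
    (∀ k l, k ≠ l → (Q k).radical ≠ (Q l).radical)

/-- The ideal obtained from `J` by the standard linear weighting `x_i ↦ x_i^{d_i}`. -/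
noncomputable def weightedIdeal (d : σ → ℕ) (J : Ideal (MvPolynomial σ K)) : Ideal (MvPolynomial σ K) :=
  Ideal.span {m | ∃ a ∈ minGens J, ∃ b : σ →₀ ℕ,
    (∀ i, b i = d i * a i) ∧ m = (monomial b (1 : K) : MvPolynomial σ K)}

/-- `I` has a standard linear weighting: there are `d_i ≥ 1` such that every
minimal generator supported on `{i,j}` is `x_i^{d_i} x_j^{d_j}`. -/
def HasStdWeighting (I : Ideal (MvPolynomial σ K)) : Prop :=
  ∃ d : σ → ℕ, (∀ i, 1 ≤ d i) ∧ ∀ a ∈ minGens I, ∀ i ∈ a.support, a i = d i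

variable (K) in
/-- The edge ideal of a simple graph. -/
noncomputable def edgeIdeal (G : SimpleGraph σ) : Ideal (MvPolynomial σ K) :=
  Ideal.span {m | ∃ i j, G.Adj i j ∧ m = (X i * X j : MvPolynomial σ K)}

end Decomp

section Graph

variable {σ : Type*}

/-- A vertex cover of a simple graph. -/
def IsVertexCover (G : SimpleGraph σ) (C : Set σ) : Prop :=
  ∀ ⦃i j⦄, G.Adj i j → i ∈ C ∨ j ∈ C

/-- A minimal vertex cover of a simple graph. -/
def IsMinimalVertexCover (G : SimpleGraph σ) (C : Set σ) : Prop :=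
  IsVertexCover G C ∧ ∀ D ⊆ C, IsVertexCover G D → D = C

end Graph

section CM

variable {K : Type*} [Field K] {σ : Type*}

/-- The depth of `S/I` with respect to the irrelevant maximal ideal
`⟨x_1, …, x_n⟩`: the supremum of lengths of regular sequences on `S/I`
consisting of elements of that ideal. -/
noncomputable def quotDepth (I : Ideal (MvPolynomial σ K)) : ℕ∞ :=
  sSup {n : ℕ∞ | ∃ rs : List (MvPolynomial σ K), (rs.length : ℕ∞) = n ∧
    (∀ r ∈ rs, r ∈ Ideal.span (Set.range (X : σ → MvPolynomial σ K))) ∧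
    RingTheory.Sequence.IsRegular (MvPolynomial σ K ⧸ I)
      (rs.map (Ideal.Quotient.mk I))}

/-- `S/I` is Cohen–Macaulay: depth equals Krull dimension. -/
def IsCohenMacaulayQuot (I : Ideal (MvPolynomial σ K)) : Prop :=
  (quotDepth I : WithBot ℕ∞) = ringKrullDim (MvPolynomial σ K ⧸ I)

/-- The height of a prime ideal, as the Krull dimension of the localization. -/
noncomputable def primeHeight' {R : Type*} [CommRing R] (P : Ideal R) (hP : P.IsPrime) :
    WithBot ℕ∞ :=
  letI := hP
  ringKrullDim (Localization.AtPrime P)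

/-- `I` is unmixed: all associated primes of `S/I` have the same height. -/
def IsUnmixed {R : Type*} [CommRing R] (I : Ideal R) : Prop :=
  ∀ P, ∀ hP : P ∈ associatedPrimes R (R ⧸ I), ∀ Q, ∀ hQ : Q ∈ associatedPrimes R (R ⧸ I),
    primeHeight' P hP.1 = primeHeight' Q hQ.1

end CM

section Stmt0Aux

open Finsupp

variable {K : Type*} [Field K] {σ : Type*}

/-- shorthand for the monomial span of a set of exponent vectors -/
private noncomputable def mSpan (A : Set (σ →₀ ℕ)) : Ideal (MvPolynomial σ K) :=
  Ideal.span ((fun a => (monomial a (1 : K) : MvPolynomial σ K)) '' A)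

private lemma filter_split (p : σ → Prop) [DecidablePred p] (x : σ →₀ ℕ) :
    x.filter p + x.filter (fun i => ¬ p i) = x := by
  ext i
  classical
  simp only [Finsupp.add_apply, Finsupp.filter_apply]
  by_cases h : p i <;> simp [h]

private lemma key_reg [LinearOrder σ] (p : σ → Prop) [DecidablePred p]
    (B : Set (σ →₀ ℕ)) (hB : ∀ b ∈ B, b.filter p = b)
    {g f : MvPolynomial σ K}
    (hg : ∃ d, g.coeff d ≠ 0 ∧ d.filter p = 0)
    (hgf : g * f ∈ (mSpan B : Ideal (MvPolynomial σ K))) :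
    f ∈ (mSpan B : Ideal (MvPolynomial σ K)) := by
  classical
  rw [mSpan, mem_ideal_span_monomial_image]
  by_contra hcon
  push_neg at hcon
  obtain ⟨c₀, hc₀f, hc₀bad⟩ := hcon
  set C : Finset (σ →₀ ℕ) := f.support.filter (fun c => ¬ ∃ b ∈ B, b ≤ c) with hC
  set f1 : MvPolynomial σ K := ∑ c ∈ C, monomial c (f.coeff c) with hf1
  have hcoeff1 : ∀ d, f1.coeff d = if d ∈ C then f.coeff d else 0 := by
    intro d
    rw [hf1, MvPolynomial.coeff_sum]
    simp only [MvPolynomial.coeff_monomial]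
    exact Finset.sum_ite_eq' C d _
  have hf2mem : f - f1 ∈ (mSpan B : Ideal (MvPolynomial σ K)) := by
    rw [mSpan, mem_ideal_span_monomial_image]
    intro c hc
    by_contra hbad
    apply MvPolynomial.mem_support_iff.mp hc
    rw [MvPolynomial.coeff_sub, hcoeff1]
    by_cases h : c ∈ C
    · simp [h]
    · have : f.coeff c = 0 := by
        by_contra hne
        exact h (Finset.mem_filter.mpr ⟨MvPolynomial.mem_support_iff.mpr hne, hbad⟩)
      simp [h, this]
  have hgf1 : g * f1 ∈ (mSpan B : Ideal (MvPolynomial σ K)) := by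
    have heq : g * f1 = g * f - g * (f - f1) := by ring
    rw [heq]
    exact Ideal.sub_mem _ hgf (Ideal.mul_mem_left _ g hf2mem)
  have hCne : C.Nonempty := ⟨c₀, Finset.mem_filter.mpr ⟨hc₀f, by
    rintro ⟨b, hbB, hle⟩; exact hc₀bad b hbB hle⟩⟩
  obtain ⟨cs, hcsC, hcsmin⟩ := C.exists_min_image
    (fun c => toLex ((toLex (c.filter p), toLex (c.filter (fun i => ¬ p i)))
      : Lex (σ →₀ ℕ) × Lex (σ →₀ ℕ))) hCne
  have hcsf : cs ∈ f.support := (Finset.mem_filter.mp hcsC).1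
  have hcsbad : ¬ ∃ b ∈ B, b ≤ cs := (Finset.mem_filter.mp hcsC).2
  obtain ⟨d0, hd0, hd0p⟩ := hg
  set D : Finset (σ →₀ ℕ) := g.support.filter (fun d => d.filter p = 0) with hD
  have hDne : D.Nonempty :=
    ⟨d0, Finset.mem_filter.mpr ⟨MvPolynomial.mem_support_iff.mpr hd0, hd0p⟩⟩
  obtain ⟨ds, hdsD, hdsmin⟩ := D.exists_min_image (fun d => toLex d) hDne
  have hdsp : ds.filter p = 0 := (Finset.mem_filter.mp hdsD).2
  have hdsg : g.coeff ds ≠ 0 := MvPolynomial.mem_support_iff.mp (Finset.mem_filter.mp hdsD).1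
  have hbadsum : ¬ ∃ b ∈ B, b ≤ ds + cs := by
    rintro ⟨b, hbB, hble⟩
    apply hcsbad
    refine ⟨b, hbB, ?_⟩
    intro i
    by_cases hpi : p i
    · have h1 : ds i = 0 := by
        have := DFunLike.congr_fun hdsp i
        simpa [Finsupp.filter_apply, hpi] using this
      have := hble i
      simp only [Finsupp.add_apply] at this
      omega
    · have h0 : b i = 0 := by
        have := DFunLike.congr_fun (hB b hbB) i
        simpa [Finsupp.filter_apply, hpi] using this.symm
      omega
  have hzero : (g * f1).coeff (ds + cs) = 0 := by
    by_contra hne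
    rw [mSpan, mem_ideal_span_monomial_image] at hgf1
    exact hbadsum (hgf1 _ (MvPolynomial.mem_support_iff.mpr hne))
  rw [MvPolynomial.coeff_mul, Finset.sum_eq_single (ds, cs)] at hzero
  · have h1 : f1.coeff cs = f.coeff cs := by rw [hcoeff1]; simp [hcsC]
    rw [h1] at hzero
    exact mul_ne_zero hdsg (MvPolynomial.mem_support_iff.mp hcsf) hzero
  · rintro ⟨d, c⟩ hmem hne
    rw [Finset.HasAntidiagonal.mem_antidiagonal] at hmem
    by_contra hterm
    have hdg : g.coeff d ≠ 0 := fun h => hterm (by simp [h])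
    have hcf1 : f1.coeff c ≠ 0 := fun h => hterm (by simp [h])
    have hcC : c ∈ C := by
      by_contra h
      exact hcf1 (by rw [hcoeff1]; simp [h])
    have hfp : d.filter p + c.filter p = cs.filter p := by
      have h := congrArg (Finsupp.filter p) hmem
      rwa [Finsupp.filter_add, Finsupp.filter_add, hdsp, zero_add] at h
    have hple : c.filter p ≤ cs.filter p := by
      rw [Finsupp.le_def]
      intro i
      have := DFunLike.congr_fun hfp i
      simp only [Finsupp.add_apply] at this
      omega
    have hlex1 : toLex (c.filter p) ≤ toLex (cs.filter p) := Finsupp.toLex_monotone hple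
    have hmin := hcsmin c hcC
    rw [Prod.Lex.le_iff] at hmin
    have hfpeq : c.filter p = cs.filter p := by
      rcases hmin with h | ⟨h, _⟩
      · exact absurd hlex1 (not_le.mpr h)
      · exact (toLex.injective h).symm
    have hqle : toLex (cs.filter (fun i => ¬ p i)) ≤ toLex (c.filter (fun i => ¬ p i)) := by
      rcases hmin with h | ⟨_, h2⟩
      · exact absurd hlex1 (not_le.mpr h)
      · exact h2
    have hdp0 : d.filter p = 0 := by
      ext i
      have h := DFunLike.congr_fun hfp i
      have h2 := DFunLike.congr_fun hfpeq i
      simp only [Finsupp.add_apply, Finsupp.coe_zero, Pi.zero_apply] at *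
      omega
    have hdD : d ∈ D := Finset.mem_filter.mpr ⟨MvPolynomial.mem_support_iff.mpr hdg, hdp0⟩
    have hds2 : toLex ds ≤ toLex d := hdsmin d hdD
    have hdq : d.filter (fun i => ¬ p i) = d := by
      have := filter_split p d
      rwa [hdp0, zero_add] at this
    have hdsq : ds.filter (fun i => ¬ p i) = ds := by
      have := filter_split p ds
      rwa [hdsp, zero_add] at this
    have hfq : d + c.filter (fun i => ¬ p i) = ds + cs.filter (fun i => ¬ p i) := by
      have h := congrArg (Finsupp.filter (fun i => ¬ p i)) hmem
      rwa [Finsupp.filter_add, Finsupp.filter_add, hdq, hdsq] at h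
    have hdeq : d = ds := by
      by_contra hne2
      have hlt : toLex ds < toLex d :=
        lt_of_le_of_ne hds2 (fun h => hne2 (toLex.injective h).symm)
      have : toLex (ds + cs.filter (fun i => ¬ p i)) < toLex (d + c.filter (fun i => ¬ p i)) := by
        calc toLex (ds + cs.filter (fun i => ¬ p i))
            = toLex ds + toLex (cs.filter (fun i => ¬ p i)) := rfl
          _ < toLex d + toLex (cs.filter (fun i => ¬ p i)) := by
              exact add_lt_add_left hlt _
          _ ≤ toLex d + toLex (c.filter (fun i => ¬ p i)) := by
              exact add_le_add_right hqle _
          _ = toLex (d + c.filter (fun i => ¬ p i)) := rfl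
      rw [hfq] at this
      exact lt_irrefl _ this
    have hceq : c = cs := by
      have hq : c.filter (fun i => ¬ p i) = cs.filter (fun i => ¬ p i) := by
        ext i
        have h := DFunLike.congr_fun hfq i
        rw [hdeq] at h
        simp only [Finsupp.add_apply] at h
        omega
      calc c = c.filter p + c.filter (fun i => ¬ p i) := (filter_split p c).symm
        _ = cs.filter p + cs.filter (fun i => ¬ p i) := by rw [hfpeq, hq]
        _ = cs := filter_split p cs
    exact hne (by rw [hdeq, hceq])
  · intro h
    exact absurd (by rw [Finset.HasAntidiagonal.mem_antidiagonal]) h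

private lemma monomial_not_mem_prime {P : Ideal (MvPolynomial σ K)} (hP : P.IsPrime)
    (e : σ →₀ ℕ) (he : ∀ i ∈ e.support, (X i : MvPolynomial σ K) ∉ P) :
    (monomial e (1 : K) : MvPolynomial σ K) ∉ P := by
  classical
  rw [MvPolynomial.monomial_eq, map_one, one_mul]
  rw [Finsupp.prod]
  refine Finset.prod_induction _ (fun x => x ∉ P)
    (fun a b ha hb hab => (hP.mem_or_mem hab).elim ha hb)
    (fun h => hP.ne_top ((Ideal.eq_top_iff_one P).mpr h)) ?_
  intro i hi hpow
  exact he i hi (hP.mem_of_pow_mem _ hpow)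

private lemma mem_localizedComponent_iff {R : Type*} [CommRing R] [IsDomain R]
    {P : Ideal R} (hP : P.IsPrime) (J : Ideal R) (x : R) :
    x ∈ localizedComponent J P hP ↔ ∃ u, u ∉ P ∧ u * x ∈ J := by
  haveI := hP
  show x ∈ Ideal.comap (algebraMap R (Localization.AtPrime P))
    (J.map (algebraMap R (Localization.AtPrime P))) ↔ _
  rw [Ideal.mem_comap, IsLocalization.mem_map_algebraMap_iff P.primeCompl]
  constructor
  · rintro ⟨⟨a, u⟩, h⟩
    refine ⟨u, u.2, ?_⟩
    have hinj : Function.Injective (algebraMap R (Localization.AtPrime P)) :=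
      IsLocalization.injective _ P.primeCompl_le_nonZeroDivisors
    have : algebraMap R (Localization.AtPrime P) ((u : R) * x) =
        algebraMap R (Localization.AtPrime P) (a : R) := by
      rw [map_mul, mul_comm]; exact h
    rw [hinj this]
    exact a.2
  · rintro ⟨u, hu, hux⟩
    refine ⟨⟨⟨u * x, hux⟩, ⟨u, hu⟩⟩, ?_⟩
    simp [map_mul, mul_comm]

private lemma localizedComponent_span_monomials [LinearOrder σ]
    {P : Ideal (MvPolynomial σ K)} (hP : P.IsPrime)
    (A : Set (σ →₀ ℕ)) (p : σ → Prop) [DecidablePred p]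
    (hp : ∀ i, p i ↔ (X i : MvPolynomial σ K) ∈ P) :
    localizedComponent (mSpan A : Ideal (MvPolynomial σ K)) P hP
      = mSpan ((fun a => a.filter p) '' A) := by
  classical
  apply le_antisymm
  · intro x hx
    rw [mem_localizedComponent_iff] at hx
    obtain ⟨u, huP, hux⟩ := hx
    refine key_reg p _ ?_ ?_ (g := u) ?_
    · rintro b ⟨a, _, rfl⟩
      ext i
      simp only [Finsupp.filter_apply]
      by_cases h : p i <;> simp [h]
    · by_contra h
      push_neg at h
      apply huP
      have hu : u = ∑ v ∈ u.support, monomial v (u.coeff v) := u.as_sum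
      rw [hu]
      refine Ideal.sum_mem _ ?_
      intro d hd
      have hdne : d.filter p ≠ 0 := h d (MvPolynomial.mem_support_iff.mp hd)
      obtain ⟨i, hi⟩ := Finsupp.ne_iff.mp hdne
      have hpi : p i ∧ d i ≠ 0 := by
        by_cases hq : p i
        · refine ⟨hq, ?_⟩
          intro h0
          apply hi
          simp [Finsupp.filter_apply, hq, h0]
        · exact absurd (by simp [Finsupp.filter_apply, hq]) hi
      have hle : Finsupp.single i 1 ≤ d := by
        rw [Finsupp.single_le_iff]
        omega
      have hmono : (monomial d (u.coeff d) : MvPolynomial σ K)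
          = X i * monomial (d - Finsupp.single i 1) (u.coeff d) := by
        rw [MvPolynomial.X, MvPolynomial.monomial_mul, one_mul,
          add_tsub_cancel_of_le hle]
      rw [hmono]
      exact Ideal.mul_mem_right _ _ ((hp i).mp hpi.1)
    · have hsub : (mSpan A : Ideal (MvPolynomial σ K)) ≤ mSpan ((fun a => a.filter p) '' A) := by
        rw [mSpan, Ideal.span_le]
        rintro _ ⟨a, ha, rfl⟩
        rw [SetLike.mem_coe, mSpan, mem_ideal_span_monomial_image]
        intro c hc
        have hc' : c = a := by
          have := MvPolynomial.support_monomial (s := a) (a := (1:K))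
          rw [if_neg one_ne_zero] at this
          simpa [this] using hc
        subst hc'
        refine ⟨c.filter p, ⟨c, ha, rfl⟩, ?_⟩
        rw [Finsupp.le_def]
        intro i
        simp only [Finsupp.filter_apply]
        by_cases h : p i <;> simp [h]
      exact hsub hux
  · rw [mSpan, Ideal.span_le]
    rintro _ ⟨b, ⟨a, haA, rfl⟩, rfl⟩
    rw [SetLike.mem_coe, mem_localizedComponent_iff]
    refine ⟨monomial (a.filter (fun i => ¬ p i)) 1, ?_, ?_⟩
    · apply monomial_not_mem_prime hP
      intro i hi
      have : ¬ p i := by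
        by_contra hq
        have := Finsupp.mem_support_iff.mp hi
        simp [Finsupp.filter_apply, hq] at this
      exact fun hXP => this ((hp i).mpr hXP)
    · rw [MvPolynomial.monomial_mul, one_mul, add_comm, filter_split]
      exact Ideal.subset_span ⟨a, haA, rfl⟩

private def powExp (A : Set (σ →₀ ℕ)) : ℕ → Set (σ →₀ ℕ)
  | 0 => {0}
  | s+1 => Set.image2 (· + ·) A (powExp A s)

private lemma mSpan_mul (A B : Set (σ →₀ ℕ)) :
    (mSpan A : Ideal (MvPolynomial σ K)) * mSpan B = mSpan (Set.image2 (· + ·) A B) := by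
  rw [mSpan, mSpan, mSpan, Ideal.span_mul_span']
  congr 1
  ext x
  simp only [Set.mem_mul, Set.mem_image, Set.mem_image2]
  constructor
  · rintro ⟨_, ⟨a, ha, rfl⟩, _, ⟨b, hb, rfl⟩, rfl⟩
    exact ⟨a + b, ⟨a, ha, b, hb, rfl⟩, by simp [MvPolynomial.monomial_mul]⟩
  · rintro ⟨_, ⟨a, ha, b, hb, rfl⟩, rfl⟩
    exact ⟨monomial a 1, ⟨a, ha, rfl⟩, monomial b 1, ⟨b, hb, rfl⟩,
      by simp [MvPolynomial.monomial_mul]⟩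

private lemma mSpan_pow (A : Set (σ →₀ ℕ)) (s : ℕ) :
    (mSpan A : Ideal (MvPolynomial σ K)) ^ s = mSpan (powExp A s) := by
  induction s with
  | zero =>
      rw [pow_zero, powExp, mSpan]
      rw [Set.image_singleton]
      rw [MvPolynomial.monomial_zero', map_one, Ideal.span_singleton_one, Ideal.one_eq_top]
  | succ s ih =>
      rw [pow_succ, ih, mul_comm, mSpan_mul]
      rfl

private lemma filter_powExp (p : σ → Prop) [DecidablePred p] (A : Set (σ →₀ ℕ)) (s : ℕ) :
    (fun a => Finsupp.filter p a) '' powExp A s = powExp ((fun a => Finsupp.filter p a) '' A) s := by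
  induction s with
  | zero => simp [powExp, Finsupp.filter_zero]
  | succ s ih =>
      show (fun a => Finsupp.filter p a) '' Set.image2 (· + ·) A (powExp A s) = _
      rw [show powExp ((fun a => Finsupp.filter p a) '' A) (s+1)
        = Set.image2 (· + ·) ((fun a => Finsupp.filter p a) '' A)
          (powExp ((fun a => Finsupp.filter p a) '' A) s) from rfl, ← ih]
      rw [Set.image_image2, Set.image2_image_left, Set.image2_image_right]
      apply Set.image2_congr
      intro a _ b _
      exact Finsupp.filter_add

private lemma localizedComponent_pow [LinearOrder σ]
    {I : Ideal (MvPolynomial σ K)} (hI : IsMonomialIdeal I)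
    {P : Ideal (MvPolynomial σ K)} (hP : P.IsPrime) (s : ℕ) :
    localizedComponent (I ^ s) P hP = (localizedComponent I P hP) ^ s := by
  classical
  obtain ⟨A, rfl⟩ := hI
  have hA : Ideal.span ((fun a => (monomial a (1 : K) : MvPolynomial σ K)) '' A)
      = (mSpan A : Ideal (MvPolynomial σ K)) := rfl
  rw [hA]
  set p : σ → Prop := fun i => (X i : MvPolynomial σ K) ∈ P with hpdef
  have hp : ∀ i, p i ↔ (X i : MvPolynomial σ K) ∈ P := fun i => Iff.rfl
  rw [mSpan_pow, localizedComponent_span_monomials hP _ p hp,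
    localizedComponent_span_monomials hP _ p hp, filter_powExp, ← mSpan_pow]

end Stmt0Aux

/-- for a monomial ideal, the s-th symbolic power equals the
intersection of the s-th powers of the primary components at minimal primes. -/
theorem stmt0 {K : Type*} [Field K] {n : ℕ} (I : Ideal (MvPolynomial (Fin n) K))
    (hI : IsMonomialIdeal I) (s : ℕ) (hs : 1 ≤ s) :
    symbolicPower I s =
      ⨅ P : I.minimalPrimes, (localizedComponent I P.1 P.2.1.1) ^ s := by
  unfold symbolicPower
  exact iInf_congr fun P => localizedComponent_pow hI P.2.1.1 s
end

section
/- Let I ⊆ S be a support-2 monomial ideal (each minimal generator has the form x_i^a x_j^b with a,b ≥ 1) whose irreducible decomposition is minimal. If for some pair (i,j) there are at least two minimal generators of I supported on {x_i, x_j}, then I^{(2)} ≠ I^2. -/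
set_option synthInstance.maxHeartbeats 1000000
set_option maxHeartbeats 1000000

open MvPolynomial

section Aux
variable {K : Type*} [Field K] {σ : Type*} [DecidableEq σ]

/-- Membership in a monomial ideal: every monomial is dominated by a generator. -/
theorem st1_mem_span_monomials_iff (A : Set (σ →₀ ℕ)) (f : MvPolynomial σ K) :
    f ∈ Ideal.span ((fun a => (monomial a (1 : K) : MvPolynomial σ K)) '' A) ↔
      ∀ m ∈ f.support, ∃ a ∈ A, a ≤ m := by
  classical
  constructor
  · intro hf
    let J : Ideal (MvPolynomial σ K) :=
      { carrier := {f | ∀ m ∈ f.support, ∃ a ∈ A, a ≤ m}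
        zero_mem' := by intro m hm; simp at hm
        add_mem' := by
          intro p q hp hq m hm
          rcases Finset.mem_union.1 (MvPolynomial.support_add hm) with h | h
          · exact hp m h
          · exact hq m h
        smul_mem' := by
          intro c p hp m hm
          rcases Finset.mem_add.1 (MvPolynomial.support_mul c p (smul_eq_mul c p ▸ hm)) with ⟨m1, hm1, m2, hm2, rfl⟩
          obtain ⟨a, haA, ham⟩ := hp m2 hm2
          exact ⟨a, haA, ham.trans (le_add_self)⟩ }
    have hle : Ideal.span ((fun a => (monomial a (1 : K) : MvPolynomial σ K)) '' A) ≤ J := by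
      rw [Ideal.span_le]
      rintro _ ⟨a, haA, rfl⟩ m hm
      rw [MvPolynomial.support_monomial] at hm
      simp only [one_ne_zero, if_false, Finset.mem_singleton] at hm
      exact ⟨a, haA, hm ▸ le_rfl⟩
    exact hle hf
  · intro h
    rw [MvPolynomial.as_sum f]
    refine Ideal.sum_mem _ ?_
    intro m hm
    obtain ⟨a, haA, ham⟩ := h m hm
    have : (monomial m (coeff m f) : MvPolynomial σ K)
        = monomial (m - a) (coeff m f) * monomial a 1 := by
      rw [MvPolynomial.monomial_mul, mul_one, tsub_add_cancel_of_le ham]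
    rw [this]
    exact Ideal.mul_mem_left _ _ (Ideal.subset_span ⟨a, haA, rfl⟩)

theorem st1_monomial_mem_span_monomials_iff (A : Set (σ →₀ ℕ)) (m : σ →₀ ℕ) :
    (monomial m (1 : K) : MvPolynomial σ K) ∈
      Ideal.span ((fun a => (monomial a (1 : K) : MvPolynomial σ K)) '' A) ↔
      ∃ a ∈ A, a ≤ m := by
  classical
  rw [st1_mem_span_monomials_iff]
  constructor
  · intro h
    refine h m ?_
    rw [MvPolynomial.support_monomial]
    simp
  · intro h m' hm'
    rw [MvPolynomial.support_monomial] at hm'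
    simp only [one_ne_zero, if_false, Finset.mem_singleton] at hm'
    exact hm' ▸ h

end Aux


section Aux
variable {K : Type*} [Field K] {σ : Type*} [DecidableEq σ]

/-- Every monomial of `I` dominates a minimal generator. -/
theorem st1_exists_minGen_le (I : Ideal (MvPolynomial σ K)) {m : σ →₀ ℕ}
    (hm : (monomial m (1 : K) : MvPolynomial σ K) ∈ I) :
    ∃ g ∈ minGens I, g ≤ m := by
  classical
  set s : Finset (σ →₀ ℕ) :=
    ((Finset.HasAntidiagonal.antidiagonal m).image Prod.fst).filter
      (fun b => (monomial b (1 : K) : MvPolynomial σ K) ∈ I) with hs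
  have hmem : ∀ b : σ →₀ ℕ, b ∈ s ↔ b ≤ m ∧ (monomial b (1 : K) : MvPolynomial σ K) ∈ I := by
    intro b
    simp only [hs, Finset.mem_filter, Finset.mem_image, Finset.HasAntidiagonal.mem_antidiagonal]
    constructor
    · rintro ⟨⟨p, hp, rfl⟩, h2⟩
      exact ⟨hp ▸ le_self_add, h2⟩
    · rintro ⟨h1, h2⟩
      exact ⟨⟨⟨b, m - b⟩, by simpa using add_tsub_cancel_of_le h1, rfl⟩, h2⟩
  have hne : s.Nonempty := ⟨m, (hmem m).2 ⟨le_rfl, hm⟩⟩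
  obtain ⟨g, hg, hgmin⟩ := s.exists_minimal hne
  obtain ⟨hgm, hgI⟩ := (hmem g).1 hg
  refine ⟨g, ⟨hgI, ?_⟩, hgm⟩
  intro c hcI hcg
  by_contra hne'
  exact (lt_of_le_of_ne hcg hne').not_ge (hgmin ((hmem c).2 ⟨hcg.trans hgm, hcI⟩) hcg)

/-- A monomial of `I ^ 2` dominates the sum of two minimal generators. -/
theorem st1_sq_monomial_dominates (I : Ideal (MvPolynomial σ K))
    (hmon : IsMonomialIdeal I) {m : σ →₀ ℕ}
    (hm : (monomial m (1 : K) : MvPolynomial σ K) ∈ I ^ 2) :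
    ∃ g ∈ minGens I, ∃ h ∈ minGens I, g + h ≤ m := by
  classical
  obtain ⟨A, hA⟩ := hmon
  have hsq : I ^ 2 ≤ Ideal.span
      ((fun a => (monomial a (1 : K) : MvPolynomial σ K)) '' (Set.image2 (· + ·) A A)) := by
    rw [pow_two, hA, Ideal.span_mul_span']
    rw [Ideal.span_le]
    rintro _ ⟨_, ⟨a, haA, rfl⟩, _, ⟨b, hbA, rfl⟩, rfl⟩
    have : (fun x1 x2 => x1 * x2) ((monomial a) (1:K)) ((monomial b) (1:K))
        = (monomial (a + b)) (1:K) := by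
      simp [MvPolynomial.monomial_mul]
    rw [this]
    exact Ideal.subset_span ⟨a + b, Set.mem_image2_of_mem haA hbA, rfl⟩
  have := (st1_monomial_mem_span_monomials_iff (K := K) _ m).1 (hsq hm)
  obtain ⟨_, ⟨a, haA, b, hbA, rfl⟩, hab⟩ := this
  have haI : (monomial a (1 : K) : MvPolynomial σ K) ∈ I := by
    rw [hA]; exact Ideal.subset_span ⟨a, haA, rfl⟩
  have hbI : (monomial b (1 : K) : MvPolynomial σ K) ∈ I := by
    rw [hA]; exact Ideal.subset_span ⟨b, hbA, rfl⟩
  obtain ⟨g, hg, hga⟩ := st1_exists_minGen_le I haI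
  obtain ⟨h, hh, hhb⟩ := st1_exists_minGen_le I hbI
  exact ⟨g, hg, h, hh, (add_le_add hga hhb).trans hab⟩

end Aux

section Aux2
variable {K : Type*} [Field K] {σ : Type*} [DecidableEq σ]

theorem st1_spanX_eq_span_monomials (C : Set σ) :
    Ideal.span ((X : σ → MvPolynomial σ K) '' C) =
      Ideal.span ((fun a => (monomial a (1 : K) : MvPolynomial σ K)) ''
        ((fun v => Finsupp.single v 1) '' C)) := by
  rw [Set.image_image]
  rfl

theorem st1_mem_spanX_iff (C : Set σ) (f : MvPolynomial σ K) :
    f ∈ Ideal.span ((X : σ → MvPolynomial σ K) '' C) ↔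
      ∀ m ∈ f.support, ∃ v ∈ C, m v ≠ 0 := by
  rw [st1_spanX_eq_span_monomials, st1_mem_span_monomials_iff]
  constructor
  · intro h m hm
    obtain ⟨_, ⟨v, hv, rfl⟩, hle⟩ := h m hm
    refine ⟨v, hv, ?_⟩
    have := Finsupp.single_le_iff.1 hle
    omega
  · intro h m hm
    obtain ⟨v, hv, hne⟩ := h m hm
    exact ⟨_, ⟨v, hv, rfl⟩, Finsupp.single_le_iff.2 (by omega)⟩

theorem st1_monomial_mem_spanX_iff (C : Set σ) (m : σ →₀ ℕ) :
    (monomial m (1 : K) : MvPolynomial σ K) ∈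
      Ideal.span ((X : σ → MvPolynomial σ K) '' C) ↔ ∃ v ∈ C, m v ≠ 0 := by
  rw [st1_spanX_eq_span_monomials, st1_monomial_mem_span_monomials_iff]
  constructor
  · rintro ⟨_, ⟨v, hv, rfl⟩, hle⟩
    have := Finsupp.single_le_iff.1 hle
    exact ⟨v, hv, by omega⟩
  · rintro ⟨v, hv, hne⟩
    exact ⟨_, ⟨v, hv, rfl⟩, Finsupp.single_le_iff.2 (by omega)⟩

theorem st1_X_mem_spanX_iff (C : Set σ) (v : σ) :
    (X v : MvPolynomial σ K) ∈ Ideal.span ((X : σ → MvPolynomial σ K) '' C) ↔ v ∈ C := by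
  rw [← pow_one (X v : MvPolynomial σ K), MvPolynomial.X_pow_eq_monomial,
    st1_monomial_mem_spanX_iff]
  constructor
  · rintro ⟨u, hu, hne⟩
    have : v = u := by
      by_contra h
      simp [Finsupp.single_apply, h] at hne
    exact this ▸ hu
  · intro hv
    exact ⟨v, hv, by simp⟩

theorem st1_spanX_isPrime (C : Set σ) :
    (Ideal.span ((X : σ → MvPolynomial σ K) '' C)).IsPrime := by
  classical
  set φ : MvPolynomial σ K →+* MvPolynomial σ K :=
    (aeval (fun v => if v ∈ C then (0 : MvPolynomial σ K) else X v)).toRingHom with hφ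
  have hker : Ideal.span ((X : σ → MvPolynomial σ K) '' C) = RingHom.ker φ := by
    apply le_antisymm
    · rw [Ideal.span_le]
      rintro _ ⟨v, hv, rfl⟩
      simp [φ, RingHom.mem_ker, hv]
    · intro f hf
      rw [RingHom.mem_ker] at hf
      rw [st1_mem_spanX_iff]
      intro m hm
      by_contra hcon
      push_neg at hcon
      -- m is C-free; compute coeff m (φ f) = coeff m f ≠ 0
      have hphimono : ∀ (m' : σ →₀ ℕ) (c : K), φ (monomial m' c) =
          if ∀ v ∈ m'.support, v ∉ C then monomial m' c else 0 := by
        intro m' c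
        simp only [φ, AlgHom.toRingHom_eq_coe, RingHom.coe_coe, aeval_monomial]
        by_cases hfree : ∀ v ∈ m'.support, v ∉ C
        · rw [if_pos hfree]
          have h1 : (m'.prod fun i k => (if i ∈ C then (0 : MvPolynomial σ K) else X i) ^ k)
              = m'.prod fun i k => (X i) ^ k := by
            apply Finsupp.prod_congr
            intro v hv
            simp [hfree v hv]
          rw [h1, algebraMap_eq, ← MvPolynomial.monomial_eq]
        · rw [if_neg hfree]
          push_neg at hfree
          obtain ⟨v, hv, hvC⟩ := hfree
          have h1 : (m'.prod fun i k => (if i ∈ C then (0 : MvPolynomial σ K) else X i) ^ k) = 0 := by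
            apply Finset.prod_eq_zero hv
            have hne0 : m' v ≠ 0 := Finsupp.mem_support_iff.1 hv
            simp [hvC, hne0]
          rw [h1, mul_zero]
      have hfreem : ∀ v ∈ m.support, v ∉ C := by
        intro v hv hvC
        exact (Finsupp.mem_support_iff.1 hv) (hcon v hvC)
      have hzero : ∀ b ∈ f.support, b ≠ m → coeff m (φ (monomial b (coeff b f))) = 0 := by
        intro m' _ hne
        rw [hphimono]
        split
        · simp [MvPolynomial.coeff_monomial, hne]
        · simp
      have hcoeff : coeff m (φ f) = coeff m f := by
        conv_lhs => rw [MvPolynomial.as_sum f]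
        rw [map_sum, MvPolynomial.coeff_sum, Finset.sum_eq_single_of_mem m hm hzero,
          hphimono, if_pos hfreem]
        simp [MvPolynomial.coeff_monomial]
      rw [hf] at hcoeff
      simp only [coeff_zero] at hcoeff
      exact (MvPolynomial.mem_support_iff.1 hm) hcoeff.symm
  rw [hker]
  exact RingHom.ker_isPrime φ

end Aux2

section Aux3
variable {K : Type*} [Field K] {σ : Type*} [DecidableEq σ]

theorem st1_monomial_mem_prime {P : Ideal (MvPolynomial σ K)} (hP : P.IsPrime)
    {m : σ →₀ ℕ} (h : (monomial m (1 : K) : MvPolynomial σ K) ∈ P) :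
    ∃ v ∈ m.support, (X v : MvPolynomial σ K) ∈ P := by
  classical
  have hprod : (m.support.prod fun v => (X v : MvPolynomial σ K) ^ m v) ∈ P := by
    have : (monomial m (1 : K) : MvPolynomial σ K)
        = m.support.prod fun v => (X v : MvPolynomial σ K) ^ m v := by
      rw [MvPolynomial.monomial_eq, MvPolynomial.C_1, one_mul]
      rfl
    exact this ▸ h
  obtain ⟨v, hv, hvP⟩ := (Ideal.IsPrime.prod_mem_iff (hp := hP)).1 hprod
  have hpos : 0 < m v := Nat.pos_of_ne_zero (Finsupp.mem_support_iff.1 hv)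
  exact ⟨v, hv, (hP.pow_mem_iff_mem _ hpos).1 hvP⟩

theorem st1_radical_span_pows (t : Finset σ) (e : σ → ℕ) (he : ∀ v ∈ t, 1 ≤ e v) :
    (Ideal.span ((fun v => (X v : MvPolynomial σ K) ^ e v) '' t)).radical
      = Ideal.span ((X : σ → MvPolynomial σ K) '' (t : Set σ)) := by
  apply le_antisymm
  · rw [Ideal.IsPrime.radical_le_iff (st1_spanX_isPrime _), Ideal.span_le]
    rintro _ ⟨v, hv, rfl⟩
    have hX : (X v : MvPolynomial σ K) ∈
        Ideal.span ((X : σ → MvPolynomial σ K) '' (t : Set σ)) :=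
      Ideal.subset_span ⟨v, hv, rfl⟩
    exact Ideal.pow_mem_of_mem _ hX _ (he v hv)
  · rw [Ideal.span_le]
    rintro _ ⟨v, hv, rfl⟩
    have hX : (X v : MvPolynomial σ K) ^ e v ∈
        (Ideal.span ((fun v => (X v : MvPolynomial σ K) ^ e v) '' t)).radical :=
      Ideal.le_radical (Ideal.subset_span ⟨v, hv, rfl⟩)
    exact Ideal.mem_radical_of_pow_mem (m := e v) hX

theorem st1_monomial_mem_span_pows_iff (t : Finset σ) (e : σ → ℕ) (m : σ →₀ ℕ) :
    (monomial m (1 : K) : MvPolynomial σ K) ∈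
      Ideal.span ((fun v => (X v : MvPolynomial σ K) ^ e v) '' t) ↔
      ∃ v ∈ t, e v ≤ m v := by
  have himg : ((fun v => (X v : MvPolynomial σ K) ^ e v) '' t)
      = ((fun a => (monomial a (1 : K) : MvPolynomial σ K)) ''
          ((fun v => Finsupp.single v (e v)) '' (t : Set σ))) := by
    rw [Set.image_image]
    apply Set.image_congr
    intro v _
    rw [MvPolynomial.X_pow_eq_monomial]
  rw [himg, st1_monomial_mem_span_monomials_iff]
  constructor
  · rintro ⟨_, ⟨v, hv, rfl⟩, hle⟩
    exact ⟨v, hv, Finsupp.single_le_iff.1 hle⟩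
  · rintro ⟨v, hv, hle⟩
    exact ⟨_, ⟨v, hv, rfl⟩, Finsupp.single_le_iff.2 hle⟩

theorem st1_mem_localizedComponent {R : Type*} [CommRing R] {I P : Ideal R}
    (hP : P.IsPrime) {x u : R} (hu : u ∉ P) (h : u * x ∈ I) :
    x ∈ localizedComponent I P hP := by
  letI := hP
  show x ∈ (I.map (algebraMap R (Localization.AtPrime P))).comap
    (algebraMap R (Localization.AtPrime P))
  rw [Ideal.mem_comap, IsLocalization.mem_map_algebraMap_iff P.primeCompl]
  refine ⟨⟨⟨u * x, h⟩, ⟨u, hu⟩⟩, ?_⟩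
  simp [mul_comm, map_mul]

end Aux3

theorem stmt1 {K : Type*} [Field K] {n : ℕ} (I : Ideal (MvPolynomial (Fin n) K))
    (hmon : IsMonomialIdeal I) (h2 : IsSupportTwo I) (hdec : HasMinimalIrredDecomp I)
    (i j : Fin n) (a b : Fin n →₀ ℕ) (ha : a ∈ supportedOn I i j)
    (hb : b ∈ supportedOn I i j) (hab : a ≠ b) :
    symbolicPower I 2 ≠ I ^ 2 := by
  classical
  obtain ⟨haMin, haSupp⟩ := ha
  obtain ⟨hbMin, hbSupp⟩ := hb
  have hij : i ≠ j := by
    intro h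
    have hcard := h2 a haMin
    rw [haSupp, h] at hcard
    simp at hcard
  -- antichain facts
  have hpair_eq : ∀ g ∈ supportedOn I i j, ∀ h ∈ supportedOn I i j,
      g i ≤ h i → g j ≤ h j → g = h := by
    rintro g ⟨⟨hgI, -⟩, hgSupp⟩ h ⟨⟨hhI, hhMin⟩, hhSupp⟩ h1 h2'
    apply hhMin g hgI
    rw [Finsupp.le_def]
    intro v
    by_cases hvi : v = i
    · subst hvi; exact h1
    by_cases hvj : v = j
    · subst hvj; exact h2'
    have : g v = 0 := by
      rw [← Finsupp.notMem_support_iff, hgSupp]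
      simp [hvi, hvj]
    simp [this]
  have hpair_i_inj : ∀ g ∈ supportedOn I i j, ∀ h ∈ supportedOn I i j,
      g i = h i → g = h := by
    intro g hg h hh he
    rcases le_total (g j) (h j) with h' | h'
    · exact hpair_eq g hg h hh he.le h'
    · exact (hpair_eq h hh g hg he.ge h').symm
  -- the minimal i-exponent
  have hT1ne : ((fun g => g i) '' supportedOn I i j).Nonempty :=
    ⟨a i, ⟨a, ⟨haMin, haSupp⟩, rfl⟩⟩
  obtain ⟨g1, hg1S, hg1i⟩ := Nat.sInf_mem hT1ne
  set α1 : ℕ := sInf ((fun g => g i) '' supportedOn I i j) with hα1def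
  set β1 : ℕ := g1 j with hβ1def
  have hg1i' : g1 i = α1 := hg1i
  have hα1_le : ∀ g ∈ supportedOn I i j, α1 ≤ g i :=
    fun g hg => Nat.sInf_le ⟨g, hg, rfl⟩
  have habne : a i ≠ b i :=
    fun h => hab (hpair_i_inj a ⟨haMin, haSupp⟩ b ⟨hbMin, hbSupp⟩ h)
  -- the second smallest i-exponent
  have hT2ne : ((fun g => g i) '' {g | g ∈ supportedOn I i j ∧ α1 < g i}).Nonempty := by
    have hA := hα1_le a ⟨haMin, haSupp⟩
    have hB := hα1_le b ⟨hbMin, hbSupp⟩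
    rcases lt_or_gt_of_ne habne with h | h
    · exact ⟨b i, ⟨b, ⟨⟨hbMin, hbSupp⟩, by omega⟩, rfl⟩⟩
    · exact ⟨a i, ⟨a, ⟨⟨haMin, haSupp⟩, by omega⟩, rfl⟩⟩
  obtain ⟨g2, ⟨hg2S, hg2gt⟩, hg2i⟩ := Nat.sInf_mem hT2ne
  set α2 : ℕ := sInf ((fun g => g i) '' {g | g ∈ supportedOn I i j ∧ α1 < g i}) with hα2def
  set β2 : ℕ := g2 j with hβ2def
  have hg2i' : g2 i = α2 := hg2i
  have hα2_le : ∀ g ∈ supportedOn I i j, α1 < g i → α2 ≤ g i :=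
    fun g hg h => Nat.sInf_le ⟨g, ⟨hg, h⟩, rfl⟩
  have hα12 : α1 < α2 := by rw [← hg2i']; exact hg2gt
  have hβ21 : β2 < β1 := by
    by_contra hcon
    push_neg at hcon
    have := hpair_eq g1 hg1S g2 hg2S (by omega) hcon
    rw [this] at hg1i'
    omega
  have hiα1 : 1 ≤ α1 := by
    rw [← hg1i']
    have : i ∈ g1.support := by rw [hg1S.2]; simp
    have := Finsupp.mem_support_iff.1 this
    omega
  have hjβ1 : 1 ≤ β1 := by
    have : j ∈ g1.support := by rw [hg1S.2]; simp
    have := Finsupp.mem_support_iff.1 this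
    omega
  -- the witness monomial
  set w : Fin n →₀ ℕ :=
    Finsupp.single i (max (2 * α1) α2) + Finsupp.single j (2 * β1 - 1) with hwdef
  have hwi : w i = max (2 * α1) α2 := by
    simp [hwdef, Finsupp.single_apply, Ne.symm hij, hij]
  have hwj : w j = 2 * β1 - 1 := by
    simp [hwdef, Finsupp.single_apply, Ne.symm hij, hij]
  have hwother : ∀ v, v ≠ i → v ≠ j → w v = 0 := by
    intro v hvi hvj
    simp [hwdef, Finsupp.single_apply, Ne.symm hvi, Ne.symm hvj]
  -- W1 : the witness is not in I ^ 2
  have hW1 : (monomial w (1 : K) : MvPolynomial (Fin n) K) ∉ I ^ 2 := by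
    intro hmem
    obtain ⟨g, hgMin, h, hhMin, hsum⟩ := st1_sq_monomial_dominates I hmon hmem
    have hsum' : ∀ v, g v + h v ≤ w v := by
      intro v
      have := Finsupp.le_def.1 hsum v
      simpa [Finsupp.add_apply] using this
    have hsupp : ∀ g' : Fin n →₀ ℕ, g' ∈ minGens I → (∀ v, g' v ≤ w v) →
        g' ∈ supportedOn I i j := by
      intro g' hg'Min hg'le
      refine ⟨hg'Min, ?_⟩
      have hsub : g'.support ⊆ {i, j} := by
        intro v hv
        have hne := Finsupp.mem_support_iff.1 hv
        by_contra hvin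
        simp only [Finset.mem_insert, Finset.mem_singleton] at hvin
        push_neg at hvin
        have := hg'le v
        rw [hwother v hvin.1 hvin.2] at this
        omega
      apply Finset.eq_of_subset_of_card_le hsub
      rw [h2 g' hg'Min, Finset.card_pair hij]
    have hgS : g ∈ supportedOn I i j :=
      hsupp g hgMin (fun v => by have := hsum' v; omega)
    have hhS : h ∈ supportedOn I i j :=
      hsupp h hhMin (fun v => by have := hsum' v; omega)
    have hsi : g i + h i ≤ max (2 * α1) α2 := by rw [← hwi]; exact hsum' i
    have hsj : g j + h j ≤ 2 * β1 - 1 := by rw [← hwj]; exact hsum' j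
    have hmax : max (2 * α1) α2 < α1 + α2 :=
      max_lt (by omega) (by omega)
    have key : ∀ g' ∈ supportedOn I i j, g' j < β1 → α2 ≤ g' i := by
      intro g' hg'S hg'j
      rcases eq_or_lt_of_le (hα1_le g' hg'S) with heq | hlt
      · exfalso
        have : g' = g1 := hpair_i_inj g' hg'S g1 hg1S (by omega)
        rw [this] at hg'j
        omega
      · exact hα2_le g' hg'S hlt
    by_cases hgj : g j < β1
    · have h1 := key g hgS hgj
      have h2' := hα1_le h hhS
      omega
    · by_cases hhj : h j < β1
      · have h1 := key h hhS hhj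
        have h2' := hα1_le g hgS
        omega
      · omega
  -- W2 : the witness is in the symbolic square
  have hW2 : (monomial w (1 : K) : MvPolynomial (Fin n) K) ∈ symbolicPower I 2 := by
    show (monomial w (1 : K) : MvPolynomial (Fin n) K) ∈
      ⨅ P : I.minimalPrimes, localizedComponent (I ^ 2) P.1 P.2.1.1
    rw [Submodule.mem_iInf]
    rintro ⟨P, hPmem⟩
    have hPprime : P.IsPrime := hPmem.1.1
    have hIP : I ≤ P := hPmem.1.2
    -- the decomposition
    obtain ⟨r, Q, hirr, hIeq, -, hrad⟩ := hdec
    have hIQ : ∀ k, I ≤ Q k := by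
      intro k
      rw [hIeq]
      exact iInf_le Q k
    have hinf : Finset.univ.inf Q ≤ P :=
      le_trans (le_iInf fun k => Finset.inf_le (Finset.mem_univ k)) (hIeq ▸ hIP)
    obtain ⟨k0, -, hk0P⟩ := (Ideal.IsPrime.inf_le' hPprime).1 hinf
    obtain ⟨t, e, he1, hQk0⟩ := hirr k0
    -- primary components below P have radical P
    have hQP : ∀ k : Fin r, Q k ≤ P → (Q k).radical = P := by
      intro k hk
      obtain ⟨t', e', he1', hQk'⟩ := hirr k
      rw [hQk', st1_radical_span_pows t' e' he1']
      have htC : ∀ v ∈ t', (X v : MvPolynomial (Fin n) K) ∈ P := by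
        intro v hv
        have hXp : (X v : MvPolynomial (Fin n) K) ^ e' v ∈ P := by
          apply hk
          rw [hQk']
          exact Ideal.subset_span ⟨v, hv, rfl⟩
        exact (hPprime.pow_mem_iff_mem _ (he1' v hv)).1 hXp
      have hle : Ideal.span ((X : Fin n → MvPolynomial (Fin n) K) '' (t' : Set (Fin n))) ≤ P := by
        rw [Ideal.span_le]
        rintro _ ⟨v, hv, rfl⟩
        exact htC v hv
      have hIt : I ≤ Ideal.span ((X : Fin n → MvPolynomial (Fin n) K) '' (t' : Set (Fin n))) := by
        refine le_trans (hIQ k) ?_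
        rw [hQk', Ideal.span_le]
        rintro _ ⟨v, hv, rfl⟩
        have hX : (X v : MvPolynomial (Fin n) K) ∈
            Ideal.span ((X : Fin n → MvPolynomial (Fin n) K) '' (t' : Set (Fin n))) :=
          Ideal.subset_span ⟨v, hv, rfl⟩
        exact Ideal.pow_mem_of_mem _ hX _ (he1' v hv)
      exact le_antisymm hle (hPmem.2 ⟨st1_spanX_isPrime _, hIt⟩ hle)
    -- saturation multiplier
    have hchoice : ∀ k : Fin r, ∃ y : MvPolynomial (Fin n) K,
        (¬ Q k ≤ P → y ∈ Q k ∧ y ∉ P) ∧ (Q k ≤ P → y = 1) := by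
      intro k
      by_cases h : Q k ≤ P
      · exact ⟨1, fun hc => absurd h hc, fun _ => rfl⟩
      · obtain ⟨y, hy1, hy2⟩ := SetLike.not_le_iff_exists.1 h
        exact ⟨y, fun _ => ⟨hy1, hy2⟩, fun hc => absurd hc h⟩
    choose uk huk1 huk2 using hchoice
    set u0 : MvPolynomial (Fin n) K := ∏ k, uk k with hu0def
    have hu0P : u0 ∉ P := by
      intro hmem
      obtain ⟨k, -, hk⟩ := (Ideal.IsPrime.prod_mem_iff (hp := hPprime)).1 hmem
      by_cases h : Q k ≤ P
      · rw [huk2 k h] at hk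
        exact hPprime.ne_top (Ideal.eq_top_iff_one P |>.2 hk)
      · exact ((huk1 k h).2) hk
    have hu0I : ∀ f : MvPolynomial (Fin n) K, f ∈ Q k0 → u0 * f ∈ I := by
      intro f hf
      rw [hIeq, Submodule.mem_iInf]
      intro k
      by_cases h : Q k ≤ P
      · have hk : k = k0 := by
          by_contra hne
          exact hrad k k0 hne (by rw [hQP k h, hQP k0 hk0P])
        subst hk
        exact Ideal.mul_mem_left _ _ hf
      · have hu0Q : u0 ∈ Q k := by
          obtain ⟨c, hc⟩ := Finset.dvd_prod_of_mem uk (Finset.mem_univ k)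
          rw [hu0def, hc]
          exact Ideal.mul_mem_right _ _ ((huk1 k h).1)
        exact Ideal.mul_mem_right _ _ hu0Q
    -- certificate builder
    have hcert : ∀ s1 s2 : Fin n →₀ ℕ,
        (monomial s1 (1 : K) : MvPolynomial (Fin n) K) ∈ Q k0 →
        (monomial s2 (1 : K) : MvPolynomial (Fin n) K) ∈ Q k0 →
        s1 + s2 ≤ w →
        (monomial w (1 : K) : MvPolynomial (Fin n) K) ∈
          localizedComponent (I ^ 2) P hPmem.1.1 := by
      intro s1 s2 hs1 hs2 hle
      have h1 : u0 * monomial s1 1 ∈ I := hu0I _ hs1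
      have h2' : u0 * monomial s2 1 ∈ I := hu0I _ hs2
      apply st1_mem_localizedComponent hPmem.1.1 (u := u0 ^ 2)
      · intro hmem
        exact hu0P ((hPprime.pow_mem_iff_mem _ (by omega : (0:ℕ) < 2)).1 hmem)
      · have hkey : (u0 * monomial s1 1) * (u0 * monomial s2 1) *
            monomial (w - (s1 + s2)) (1 : K) ∈ I ^ 2 := by
          rw [pow_two]
          exact Ideal.mul_mem_right _ _ (Ideal.mul_mem_mul h1 h2')
        have heqm : u0 ^ 2 * (monomial w (1 : K) : MvPolynomial (Fin n) K)
            = (u0 * monomial s1 1) * (u0 * monomial s2 1) *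
              monomial (w - (s1 + s2)) (1 : K) := by
          have hsum : s1 + s2 + (w - (s1 + s2)) = w := add_tsub_cancel_of_le hle
          calc u0 ^ 2 * (monomial w (1 : K) : MvPolynomial (Fin n) K)
              = u0 ^ 2 * (monomial (s1 + s2 + (w - (s1 + s2))) (1 : K)) := by rw [hsum]
            _ = u0 ^ 2 * ((monomial s1 1 * monomial s2 1) * monomial (w - (s1 + s2)) 1) := by
                rw [MvPolynomial.monomial_mul, MvPolynomial.monomial_mul, one_mul, one_mul]
            _ = (u0 * monomial s1 1) * (u0 * monomial s2 1) *
                monomial (w - (s1 + s2)) (1 : K) := by ring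
        rw [heqm]
        exact hkey
    -- domination of pair generators
    have hdom : ∀ g ∈ supportedOn I i j,
        (i ∈ t ∧ e i ≤ g i) ∨ (j ∈ t ∧ e j ≤ g j) := by
      rintro g ⟨⟨hgI, -⟩, hgSupp⟩
      have hmem : (monomial g (1 : K) : MvPolynomial (Fin n) K) ∈ Q k0 := hIQ k0 hgI
      rw [hQk0, st1_monomial_mem_span_pows_iff] at hmem
      obtain ⟨v, hvt, hev⟩ := hmem
      have hgv : g v ≠ 0 := by
        have := he1 v hvt
        omega
      have hvsupp : v ∈ g.support := Finsupp.mem_support_iff.2 hgv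
      rw [hgSupp] at hvsupp
      simp only [Finset.mem_insert, Finset.mem_singleton] at hvsupp
      rcases hvsupp with rfl | rfl
      · exact Or.inl ⟨hvt, hev⟩
      · exact Or.inr ⟨hvt, hev⟩
    -- generators of Q k0 as monomials
    have hQgen : ∀ v ∈ t, (monomial (Finsupp.single v (e v)) (1 : K) :
        MvPolynomial (Fin n) K) ∈ Q k0 := by
      intro v hv
      rw [hQk0, st1_monomial_mem_span_pows_iff]
      exact ⟨v, hv, by simp⟩
    -- case analysis
    rcases hdom g1 hg1S with ⟨hit, hei⟩ | ⟨hjt, hej⟩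
    · -- e i ≤ α1 : use x_i^{e i} squared
      refine hcert (Finsupp.single i (e i)) (Finsupp.single i (e i))
        (hQgen i hit) (hQgen i hit) ?_
      rw [Finsupp.le_def]
      intro v
      by_cases hvi : v = i
      · have h1 : e i ≤ α1 := hg1i' ▸ hei
        have h2m := le_max_left (2 * α1) α2
        simp only [hvi, Finsupp.add_apply, Finsupp.single_eq_same]
        rw [hwi]
        omega
      · simp [Finsupp.single_apply, Ne.symm hvi]
    · rcases hdom g2 hg2S with ⟨hit2, hei2⟩ | ⟨hjt2, hej2⟩
      · -- e i ≤ α2 and e j ≤ β1 : mixed certificate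
        refine hcert (Finsupp.single i (e i)) (Finsupp.single j (e j))
          (hQgen i hit2) (hQgen j hjt) ?_
        rw [Finsupp.le_def]
        intro v
        by_cases hvi : v = i
        · have h1 : e i ≤ α2 := hg2i' ▸ hei2
          have h2m := le_max_right (2 * α1) α2
          simp only [hvi, Finsupp.add_apply, Finsupp.single_eq_same,
            Finsupp.single_eq_of_ne' (show j ≠ i from Ne.symm hij)]
          rw [hwi]
          omega
        · by_cases hvj : v = j
          · have h1 : e j ≤ β1 := hej
            simp only [hvj, Finsupp.add_apply, Finsupp.single_eq_same,
              Finsupp.single_eq_of_ne' (show i ≠ j from hij)]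
            rw [hwj]
            omega
          · simp [Finsupp.single_apply, Ne.symm hvi, Ne.symm hvj]
      · -- e j ≤ β2 < β1 : use x_j^{e j} squared
        have h1 : e j ≤ β2 := hej2
        refine hcert (Finsupp.single j (e j)) (Finsupp.single j (e j))
          (hQgen j hjt) (hQgen j hjt) ?_
        rw [Finsupp.le_def]
        intro v
        by_cases hvj : v = j
        · simp only [hvj, Finsupp.add_apply, Finsupp.single_eq_same]
          rw [hwj]
          omega
        · simp [Finsupp.single_apply, Ne.symm hvj]

  intro heq
  rw [heq] at hW2
  exact hW1 hW2
end

section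
/- Let I ⊆ S be a support-2 monomial ideal whose underlying graph G(I) has girth at least six. Suppose {x_i, x_j} ∈ E(G(I)) has at least two minimal generators of I supported on it, and suppose for every leaf vertex x_ℓ of G(I) the distance d(x_i, x_ℓ) ≥ 2 (or for every leaf x_ℓ, d(x_j, x_ℓ) ≥ 2). Then I^{(1)} ≠ I. -/
set_option synthInstance.maxHeartbeats 1000000
set_option maxHeartbeats 1000000

open MvPolynomial

section Helpers

open SimpleGraph

variable {α : Type*} {G : SimpleGraph α}

lemma cyc3 (h6 : 6 ≤ G.egirth) {a b c : α} (h1 : G.Adj a b) (h2 : G.Adj b c)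
    (h3 : G.Adj c a) : False := by
  have hc : (Walk.cons h1 (Walk.cons h2 (Walk.cons h3 Walk.nil))).IsCycle := by
    simp [Walk.isCycle_def, Walk.isTrail_def, List.Nodup, Sym2.eq, h1.ne, h2.ne, h3.ne,
      h1.ne', h2.ne', h3.ne']
  have := le_egirth.mp h6 a _ hc
  norm_num at this

lemma cyc4 (h6 : 6 ≤ G.egirth) {a b c d : α} (h1 : G.Adj a b) (h2 : G.Adj b c)
    (h3 : G.Adj c d) (h4 : G.Adj d a) (hac : a ≠ c) (hbd : b ≠ d) : False := by
  have hc : (Walk.cons h1 (Walk.cons h2 (Walk.cons h3 (Walk.cons h4 Walk.nil)))).IsCycle := by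
    simp [Walk.isCycle_def, Walk.isTrail_def, List.Nodup, Sym2.eq, h1.ne, h2.ne, h3.ne,
      h4.ne, h1.ne', h2.ne', h3.ne', h4.ne', hac, hbd, hac.symm, hbd.symm]
  have := le_egirth.mp h6 a _ hc
  norm_num at this

lemma cyc5 (h6 : 6 ≤ G.egirth) {a b c d e : α} (h1 : G.Adj a b) (h2 : G.Adj b c)
    (h3 : G.Adj c d) (h4 : G.Adj d e) (h5 : G.Adj e a) (hac : a ≠ c) (had : a ≠ d)
    (hbd : b ≠ d) (hbe : b ≠ e) (hce : c ≠ e) : False := by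
  have hc : (Walk.cons h1 (Walk.cons h2 (Walk.cons h3 (Walk.cons h4
      (Walk.cons h5 Walk.nil))))).IsCycle := by
    simp [Walk.isCycle_def, Walk.isTrail_def, List.Nodup, Sym2.eq, h1.ne, h2.ne, h3.ne,
      h4.ne, h5.ne, h1.ne', h2.ne', h3.ne', h4.ne', h5.ne', hac, had, hbd, hbe, hce,
      hac.symm, had.symm, hbd.symm, hbe.symm, hce.symm]
  have := le_egirth.mp h6 a _ hc
  norm_num at this

end Helpers

section MonoHelpers

open MvPolynomial

variable {K : Type*} [Field K] {σ : Type*}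

lemma mono_mem_of_le {I : Ideal (MvPolynomial σ K)} {g c : σ →₀ ℕ}
    (hg : (monomial g (1:K)) ∈ I) (hle : g ≤ c) : (monomial c (1:K)) ∈ I := by
  have : (monomial c (1:K)) = monomial (c - g) (1:K) * monomial g 1 := by
    rw [monomial_mul, one_mul, tsub_add_cancel_of_le hle]
  rw [this]
  exact Ideal.mul_mem_left _ _ hg

lemma le_antisymm_of_sum {b' b : σ →₀ ℕ} (h : b' ≤ b)
    (hs : (b.sum fun _ e => e) ≤ (b'.sum fun _ e => e)) : b' = b := by
  classical
  ext v
  by_contra hne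
  have hlt : b' v < b v := lt_of_le_of_ne (h v) hne
  have hsupp : b'.support ⊆ b.support := Finsupp.support_mono h
  have h1 : (b'.sum fun _ e => e) = ∑ x ∈ b.support, b' x :=
    Finset.sum_subset hsupp (by intro x _ hx; exact Finsupp.notMem_support_iff.mp hx)
  have h2 : ∑ x ∈ b.support, b' x < ∑ x ∈ b.support, b x := by
    apply Finset.sum_lt_sum (fun x _ => h x)
    refine ⟨v, Finsupp.mem_support_iff.mpr ?_, hlt⟩
    omega
  rw [Finsupp.sum] at hs
  omega

lemma exists_minGen_le {I : Ideal (MvPolynomial σ K)} {c : σ →₀ ℕ}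
    (hc : (monomial c (1:K)) ∈ I) : ∃ g ∈ minGens I, g ≤ c := by
  classical
  set T : Set ℕ := {d | ∃ b : σ →₀ ℕ, b ≤ c ∧ (monomial b (1:K)) ∈ I ∧ (b.sum fun _ e => e) = d}
    with hT
  have hne : T.Nonempty := ⟨_, c, le_refl c, hc, rfl⟩
  obtain ⟨b, hbc, hbI, hbd⟩ := Nat.sInf_mem hne
  refine ⟨b, ⟨hbI, ?_⟩, hbc⟩
  intro b' hb'I hb'b
  have : (b'.sum fun _ e => e) ∈ T := ⟨b', hb'b.trans hbc, hb'I, rfl⟩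
  have hge : sInf T ≤ (b'.sum fun _ e => e) := Nat.sInf_le this
  exact le_antisymm_of_sum hb'b (by omega)

lemma mono_mem_iff {I : Ideal (MvPolynomial σ K)} (hmon : IsMonomialIdeal I) {c : σ →₀ ℕ} :
    (monomial c (1:K)) ∈ I ↔ ∃ g ∈ minGens I, g ≤ c := by
  constructor
  · intro hc
    obtain ⟨A, hA⟩ := hmon
    rw [hA, mem_ideal_span_monomial_image] at hc
    have hcs : c ∈ (monomial c (1:K)).support := by
      classical
      rw [support_monomial, if_neg one_ne_zero]
      exact Finset.mem_singleton_self c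
    obtain ⟨a, haA, hac⟩ := hc c hcs
    have haI : (monomial a (1:K)) ∈ I := by
      rw [hA]; exact Ideal.subset_span ⟨a, haA, rfl⟩
    obtain ⟨g, hg, hga⟩ := exists_minGen_le haI
    exact ⟨g, hg, hga.trans hac⟩
  · rintro ⟨g, hg, hgc⟩
    exact mono_mem_of_le hg.1 hgc

noncomputable def killVars (s : Set σ) : MvPolynomial σ K →ₐ[K] MvPolynomial σ K :=
  aeval (fun v => by classical exact if v ∈ s then 0 else X v)

lemma sub_killVars_mem_span (s : Set σ) (f : MvPolynomial σ K) :
    f - killVars s f ∈ Ideal.span ((fun v => (X v : MvPolynomial σ K)) '' s) := by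
  classical
  induction f using MvPolynomial.induction_on with
  | C a => simp [killVars]
  | add p q hp hq =>
      have := Ideal.add_mem _ hp hq
      convert this using 1
      simp [killVars]
      ring
  | mul_X p v hp =>
      rw [killVars] at hp ⊢
      rw [map_mul, aeval_X]
      by_cases hv : v ∈ s
      · rw [if_pos hv, mul_zero, sub_zero]
        exact Ideal.mul_mem_left _ _ (Ideal.subset_span ⟨v, hv, rfl⟩)
      · rw [if_neg hv]
        have : p * X v - (aeval fun v => if v ∈ s then 0 else X v) p * X v
            = (p - (aeval fun v => if v ∈ s then 0 else X v) p) * X v := by ring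
        rw [this]
        exact Ideal.mul_mem_right _ _ hp

lemma span_X_eq_ker (s : Set σ) :
    Ideal.span ((fun v => (X v : MvPolynomial σ K)) '' s)
      = RingHom.ker (killVars (K := K) s).toRingHom := by
  classical
  apply le_antisymm
  · rw [Ideal.span_le]
    rintro _ ⟨v, hv, rfl⟩
    simp [RingHom.mem_ker, killVars, if_pos hv]
  · intro f hf
    have h0 : killVars (K := K) s f = 0 := hf
    have := sub_killVars_mem_span (K := K) s f
    rwa [h0, sub_zero] at this

lemma span_X_isPrime (s : Set σ) :
    (Ideal.span ((fun v => (X v : MvPolynomial σ K)) '' s)).IsPrime := by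
  rw [span_X_eq_ker]
  exact RingHom.ker_isPrime _

lemma X_mem_span_X_iff (s : Set σ) (v : σ) :
    (X v : MvPolynomial σ K) ∈ Ideal.span ((fun v => (X v : MvPolynomial σ K)) '' s) ↔ v ∈ s := by
  classical
  constructor
  · intro h
    rw [span_X_eq_ker] at h
    have : killVars (K := K) s (X v) = 0 := h
    rw [killVars, aeval_X] at this
    by_contra hv
    rw [if_neg hv] at this
    exact X_ne_zero v this
  · intro hv
    exact Ideal.subset_span ⟨v, hv, rfl⟩

lemma mem_localizedComponent' {R : Type*} [CommRing R] {I P : Ideal R} (hP : P.IsPrime)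
    {m s : R} (hs : s ∉ P) (hsm : s * m ∈ I) : m ∈ localizedComponent I P hP := by
  letI := hP
  show algebraMap R (Localization.AtPrime P) m ∈ I.map (algebraMap R (Localization.AtPrime P))
  have hu : IsUnit (algebraMap R (Localization.AtPrime P) s) :=
    IsLocalization.map_units (Localization.AtPrime P) (⟨s, hs⟩ : P.primeCompl)
  obtain ⟨v, hv⟩ := hu.exists_left_inv
  have h1 : algebraMap R (Localization.AtPrime P) (s * m) ∈
      I.map (algebraMap R (Localization.AtPrime P)) := Ideal.mem_map_of_mem _ hsm
  have h2 : algebraMap R (Localization.AtPrime P) m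
      = v * algebraMap R (Localization.AtPrime P) (s * m) := by
    rw [map_mul, ← mul_assoc, hv, one_mul]
  rw [h2]
  exact Ideal.mul_mem_left _ _ h1

lemma mem_symbolicPower_one {R : Type*} [CommRing R] {I : Ideal R} {m : R}
    (h : ∀ P ∈ I.minimalPrimes, ∃ s : R, s ∉ P ∧ s * m ∈ I) : m ∈ symbolicPower I 1 := by
  rw [symbolicPower, Submodule.mem_iInf]
  rintro ⟨P, hP⟩
  obtain ⟨s, hs, hsm⟩ := h P hP
  exact mem_localizedComponent' hP.1.1 hs (by rwa [pow_one])

variable [DecidableEq σ]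

lemma support_pair_apply_eq_zero {g : σ →₀ ℕ} {u v w : σ} (hs : g.support = {u, v})
    (hwu : w ≠ u) (hwv : w ≠ v) : g w = 0 := by
  rw [← Finsupp.notMem_support_iff, hs]
  simp [hwu, hwv]

lemma mono_eq_prod {g : σ →₀ ℕ} {u v : σ} (huv : u ≠ v) (hs : g.support = {u, v}) :
    (monomial g (1:K)) = X u ^ (g u) * X v ^ (g v) := by
  have hg : g = Finsupp.single u (g u) + Finsupp.single v (g v) := by
    ext w
    rw [Finsupp.add_apply, Finsupp.single_apply, Finsupp.single_apply]
    by_cases hwu : u = w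
    · subst hwu
      rw [if_pos rfl, if_neg (fun h => huv h.symm), add_zero]
    · by_cases hwv : v = w
      · subst hwv
        rw [if_neg hwu, if_pos rfl, zero_add]
      · rw [if_neg hwu, if_neg hwv,
          support_pair_apply_eq_zero hs (fun h => hwu h.symm) (fun h => hwv h.symm), add_zero]
  rw [X_pow_eq_monomial, X_pow_eq_monomial, monomial_mul, mul_one, ← hg]

end MonoHelpers


section CoverHelpers

open MvPolynomial

variable {K : Type*} [Field K] {σ : Type*} [DecidableEq σ] {I : Ideal (MvPolynomial σ K)}

lemma adj_of_minGen {g : σ →₀ ℕ} (hg : g ∈ minGens I) {u v : σ} (huv : u ≠ v)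
    (hs : g.support = {u, v}) : (underGraph I).Adj u v :=
  ⟨huv, ⟨g, hg, hs⟩⟩

lemma exists_pair_of_minGen (h2 : IsSupportTwo I) {g : σ →₀ ℕ} (hg : g ∈ minGens I) :
    ∃ u v, u ≠ v ∧ g.support = {u, v} :=
  Finset.card_eq_two.mp (h2 g hg)

lemma X_eq_monomial (u : σ) : (X u : MvPolynomial σ K) = monomial (Finsupp.single u 1) 1 := by
  rw [← X_pow_eq_monomial, pow_one]

lemma cover_of_prime {P : Ideal (MvPolynomial σ K)} (hP : P.IsPrime) (hIP : I ≤ P) :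
    IsVertexCover (underGraph I) {v | (X v : MvPolynomial σ K) ∈ P} := by
  rintro u v ⟨hne, g, hgmin, hgs⟩
  have hm : (monomial g (1:K)) ∈ P := hIP hgmin.1
  rw [mono_eq_prod hne hgs] at hm
  rcases hP.mem_or_mem hm with h | h
  · exact Or.inl (hP.mem_of_pow_mem _ h)
  · exact Or.inr (hP.mem_of_pow_mem _ h)

lemma ideal_le_span_cover (hmon : IsMonomialIdeal I) (h2 : IsSupportTwo I) {C : Set σ}
    (hC : IsVertexCover (underGraph I) C) :
    I ≤ Ideal.span ((fun v => (X v : MvPolynomial σ K)) '' C) := by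
  obtain ⟨A, hA⟩ := hmon
  conv_lhs => rw [hA]
  rw [Ideal.span_le]
  rintro _ ⟨c, hcA, rfl⟩
  have hcI : (monomial c (1:K)) ∈ I := by
    rw [hA]; exact Ideal.subset_span ⟨c, hcA, rfl⟩
  obtain ⟨g, hgmin, hgc⟩ := exists_minGen_le hcI
  obtain ⟨u, v, huv, hs⟩ := exists_pair_of_minGen h2 hgmin
  have hadj := adj_of_minGen hgmin huv hs
  have key : ∀ w : σ, w ∈ C → w ∈ g.support →
      (monomial c (1:K)) ∈ Ideal.span ((fun v => (X v : MvPolynomial σ K)) '' C) := by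
    intro w hwC hws
    apply mono_mem_of_le (g := Finsupp.single w 1)
    · rw [← X_eq_monomial]
      exact Ideal.subset_span ⟨w, hwC, rfl⟩
    · rw [Finsupp.single_le_iff]
      have h1 : 1 ≤ g w := Finsupp.mem_support_iff.mp hws |>.bot_lt
      exact le_trans h1 (hgc w)
  rcases hC hadj with h | h
  · exact key u h (by rw [hs]; simp)
  · exact key v h (by rw [hs]; simp)

lemma minimalPrime_structure [Finite σ] (hmon : IsMonomialIdeal I) (h2 : IsSupportTwo I)
    {P : Ideal (MvPolynomial σ K)} (hP : P ∈ I.minimalPrimes) :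
    IsVertexCover (underGraph I) {v | (X v : MvPolynomial σ K) ∈ P} ∧
    ∀ v, (X v : MvPolynomial σ K) ∈ P →
      ∃ w, (underGraph I).Adj v w ∧ (X w : MvPolynomial σ K) ∉ P := by
  classical
  have hPp : P.IsPrime := hP.1.1
  have hIP : I ≤ P := hP.1.2
  set C : Set σ := {v | (X v : MvPolynomial σ K) ∈ P} with hCdef
  have hCcov : IsVertexCover (underGraph I) C := cover_of_prime hPp hIP
  -- minimal cardinality subcover
  set T : Set ℕ := {k | ∃ D : Set σ, D ⊆ C ∧ IsVertexCover (underGraph I) D ∧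
    D.Finite ∧ D.ncard = k} with hTdef
  have hTne : T.Nonempty := ⟨C.ncard, C, le_refl _, hCcov, Set.toFinite C, rfl⟩
  obtain ⟨D, hDC, hDcov, hDfin, hDcard⟩ := Nat.sInf_mem hTne
  have hIP0 : I ≤ Ideal.span ((fun v => (X v : MvPolynomial σ K)) '' D) :=
    ideal_le_span_cover hmon h2 hDcov
  have hP0P : Ideal.span ((fun v => (X v : MvPolynomial σ K)) '' D) ≤ P := by
    rw [Ideal.span_le]
    rintro _ ⟨v, hv, rfl⟩
    exact hDC hv
  have hPeq : P = Ideal.span ((fun v => (X v : MvPolynomial σ K)) '' D) :=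
    le_antisymm (hP.2 ⟨span_X_isPrime D, hIP0⟩ hP0P) hP0P
  have hCD : C = D := by
    ext v
    rw [hCdef, Set.mem_setOf_eq, hPeq, X_mem_span_X_iff]
  refine ⟨hCcov, ?_⟩
  intro v hv
  have hvD : v ∈ D := by rw [← hCD]; exact hv
  have hnc : ¬ IsVertexCover (underGraph I) (D \ {v}) := by
    intro hcov
    have hmem : (D \ {v}).ncard ∈ T :=
      ⟨D \ {v}, (Set.diff_subset).trans hDC, hcov, hDfin.diff, rfl⟩
    have hlt : (D \ {v}).ncard < D.ncard := Set.ncard_diff_singleton_lt_of_mem hvD hDfin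
    have hle := Nat.sInf_le hmem
    omega
  rw [IsVertexCover] at hnc
  push_neg at hnc
  obtain ⟨p, q, hadj, hp, hq⟩ := hnc
  have hXnot : ∀ w, w ∉ D → (X w : MvPolynomial σ K) ∉ P := by
    intro w hw hXw
    exact hw (by rw [← hCD]; exact hXw)
  rcases hDcov hadj with hpd | hqd
  · have hpv : p = v := by
      by_contra hne
      exact hp ⟨hpd, hne⟩
    have hadj2 : (underGraph I).Adj v q := hpv ▸ hadj
    have hqv : q ≠ v := fun h => hadj2.ne h.symm
    have hqD : q ∉ D := fun h => hq ⟨h, hqv⟩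
    exact ⟨q, hadj2, hXnot q hqD⟩
  · have hqv : q = v := by
      by_contra hne
      exact hq ⟨hqd, hne⟩
    have hadj2 : (underGraph I).Adj p v := hqv ▸ hadj
    have hpv : p ≠ v := hadj2.ne
    have hpD : p ∉ D := fun h => hp ⟨h, hpv⟩
    exact ⟨p, hadj2.symm, hXnot p hpD⟩

end CoverHelpers


section MainLemma

open MvPolynomial SimpleGraph

lemma key_lemma {K : Type*} [Field K] {n : ℕ} (I : Ideal (MvPolynomial (Fin n) K))
    (hmon : IsMonomialIdeal I) (h2 : IsSupportTwo I)
    (hgirth : 6 ≤ (underGraph I).egirth)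
    (i j : Fin n) (a b : Fin n →₀ ℕ) (ha : a ∈ supportedOn I i j)
    (hb : b ∈ supportedOn I i j) (hab : a ≠ b)
    (hl : ∀ ℓ : Fin n, ((underGraph I).neighborSet ℓ).ncard = 1 →
        2 ≤ (underGraph I).dist i ℓ) :
    symbolicPower I 1 ≠ I := by
  classical
  set G := underGraph I with hG
  have hij : i ≠ j := by
    intro h
    have hc := h2 a ha.1
    rw [ha.2, h] at hc
    simp at hc
  have hadjij : G.Adj i j := ⟨hij, ⟨a, ha⟩⟩
  -- minimizers of the i- and j-exponents among generators on edge {i,j}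
  have hTi : ((fun g => g i) '' supportedOn I i j).Nonempty := ⟨a i, a, ha, rfl⟩
  obtain ⟨a', ha', ha'i⟩ := Nat.sInf_mem hTi
  have hmini : ∀ g ∈ supportedOn I i j, a' i ≤ g i := by
    intro g hg
    have : (fun g => g i) a' = a' i := rfl
    rw [this] at ha'i
    rw [ha'i]
    exact Nat.sInf_le ⟨g, hg, rfl⟩
  have hTj : ((fun g => g j) '' supportedOn I i j).Nonempty := ⟨a j, a, ha, rfl⟩
  obtain ⟨b', hb', hb'j⟩ := Nat.sInf_mem hTj
  have hminj : ∀ g ∈ supportedOn I i j, b' j ≤ g j := by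
    intro g hg
    have : (fun g => g j) b' = b' j := rfl
    rw [this] at hb'j
    rw [hb'j]
    exact Nat.sInf_le ⟨g, hg, rfl⟩
  have so0 : ∀ g ∈ supportedOn I i j, ∀ w, w ≠ i → w ≠ j → g w = 0 :=
    fun g hg w hwi hwj => support_pair_apply_eq_zero hg.2 hwi hwj
  -- neighbors of i are not leaves
  have hnb : ∀ k : Fin n, G.Adj i k → ∃ t, G.Adj k t ∧ t ≠ i := by
    intro k hk
    by_contra hno
    push_neg at hno
    have hNk : G.neighborSet k = {i} := by
      ext u
      simp only [mem_neighborSet, Set.mem_singleton_iff]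
      exact ⟨fun h => hno u h, fun h => h ▸ hk.symm⟩
    have h1 : (G.neighborSet k).ncard = 1 := by rw [hNk, Set.ncard_singleton]
    have h2' := hl k h1
    have h3 : G.dist i k = 1 := SimpleGraph.dist_eq_one_iff_adj.mpr hk
    omega
  -- the set F of neighbors of i other than j
  set F : Finset (Fin n) := Set.Finite.toFinset (Set.toFinite (G.neighborSet i \ {j}))
    with hFdef
  have hFmem : ∀ k, k ∈ F ↔ (G.Adj i k ∧ k ≠ j) := by
    intro k
    rw [hFdef, Set.Finite.mem_toFinset, Set.mem_diff, mem_neighborSet, Set.mem_singleton_iff]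
  -- selection of second neighbors and generators
  have hsel : ∀ k : Fin n, ∃ p : Fin n × (Fin n →₀ ℕ),
      (G.Adj i k ∧ k ≠ j) → (G.Adj k p.1 ∧ p.1 ≠ i ∧ p.2 ∈ supportedOn I k p.1) := by
    intro k
    by_cases hk : G.Adj i k ∧ k ≠ j
    · obtain ⟨u, huadj, hui⟩ := hnb k hk.1
      obtain ⟨g, hg⟩ := huadj.2
      exact ⟨(u, g), fun _ => ⟨huadj, hui, hg⟩⟩
    · exact ⟨(k, 0), fun h => absurd h hk⟩
  choose sel hselp using hsel
  set t : Fin n → Fin n := fun k => (sel k).1 with htdef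
  set gg : Fin n → (Fin n →₀ ℕ) := fun k => (sel k).2 with hggdef
  have hkprop : ∀ k ∈ F, G.Adj k (t k) ∧ t k ≠ i ∧ gg k ∈ supportedOn I k (t k) :=
    fun k hk => hselp k ((hFmem k).mp hk)
  have hadjik : ∀ k ∈ F, G.Adj i k := fun k hk => ((hFmem k).mp hk).1
  have hknej : ∀ k ∈ F, k ≠ j := fun k hk => ((hFmem k).mp hk).2
  have hknei : ∀ k ∈ F, k ≠ i := fun k hk => (hadjik k hk).ne'
  have htnotadj : ∀ k ∈ F, ¬ G.Adj i (t k) := by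
    intro k hk hadj
    exact cyc3 hgirth (hadjik k hk) (hkprop k hk).1 hadj.symm
  have htnej : ∀ k ∈ F, t k ≠ j := by
    intro k hk h
    have hkj : G.Adj k j := by rw [← h]; exact (hkprop k hk).1
    exact cyc3 hgirth (hadjik k hk) hkj hadjij.symm
  have htnei : ∀ k ∈ F, t k ≠ i := fun k hk => (hkprop k hk).2.1
  have htinj : ∀ k ∈ F, ∀ k' ∈ F, k ≠ k' → t k ≠ t k' := by
    intro k hk k' hk' hne he
    have h3 : G.Adj (t k) k' := by rw [he]; exact (hkprop k' hk').1.symm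
    exact cyc4 hgirth (hadjik k hk) (hkprop k hk).1 h3 (hadjik k' hk').symm
      (fun h => (htnei k hk) h.symm) hne
  have hknt : ∀ k ∈ F, ∀ k' ∈ F, k ≠ t k' := by
    intro k hk k' hk' h
    apply htnotadj k' hk'
    rw [← h]
    exact hadjik k hk
  -- the witness monomial exponent vector
  set m : Fin n →₀ ℕ := Finsupp.single i (a' i) + Finsupp.single j (b' j)
      + ∑ k ∈ F, Finsupp.single (t k) (gg k (t k)) with hmdef
  have hmapply : ∀ w, m w = (if i = w then a' i else 0) + (if j = w then b' j else 0)
      + ∑ k ∈ F, (if t k = w then gg k (t k) else 0) := by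
    intro w
    rw [hmdef, Finsupp.add_apply, Finsupp.add_apply, Finsupp.finset_sum_apply]
    simp only [Finsupp.single_apply]
  have hmi : m i = a' i := by
    rw [hmapply, if_pos rfl, if_neg (Ne.symm hij), Finset.sum_eq_zero
      (fun k hk => if_neg (htnei k hk))]
    omega
  have hmj : m j = b' j := by
    rw [hmapply, if_neg hij, if_pos rfl, Finset.sum_eq_zero
      (fun k hk => if_neg (htnej k hk))]
    omega
  have hmt : ∀ k ∈ F, m (t k) = gg k (t k) := by
    intro k hk
    rw [hmapply, if_neg (fun h => (htnei k hk) h.symm), if_neg (fun h => (htnej k hk) h.symm),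
      Finset.sum_eq_single_of_mem k hk
        (fun k' hk' hne => if_neg (htinj k' hk' k hk hne)), if_pos rfl]
    omega
  have hm0 : ∀ w, w ≠ i → w ≠ j → (∀ k ∈ F, w ≠ t k) → m w = 0 := by
    intro w h1 h2' h3
    rw [hmapply, if_neg (fun h => h1 h.symm), if_neg (fun h => h2' h.symm),
      Finset.sum_eq_zero (fun k hk => if_neg (fun h => h3 k hk h.symm))]
    omega
  -- the witness monomial is not in I
  have hfinal : ∀ g₀ : Fin n →₀ ℕ, g₀ ∈ minGens I → g₀.support = {i, j} → g₀ ≤ m → False := by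
    intro g₀ hg₀ hsup hle
    have hgso : g₀ ∈ supportedOn I i j := ⟨hg₀, hsup⟩
    have hgi : g₀ i ≤ a' i := hmi ▸ hle i
    have hgj : g₀ j ≤ b' j := hmj ▸ hle j
    have hga' : g₀ ≤ a' := by
      intro w
      by_cases hwi : w = i
      · subst hwi; exact hgi
      · by_cases hwj : w = j
        · subst hwj; exact hgj.trans (hminj a' ha')
        · rw [so0 g₀ hgso w hwi hwj]; exact Nat.zero_le _
    have hgb' : g₀ ≤ b' := by
      intro w
      by_cases hwi : w = i
      · subst hwi; exact hgi.trans (hmini b' hb')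
      · by_cases hwj : w = j
        · subst hwj; exact hgj
        · rw [so0 g₀ hgso w hwi hwj]; exact Nat.zero_le _
    have he1 : g₀ = a' := ha'.1.2 g₀ hg₀.1 hga'
    have he2 : g₀ = b' := hb'.1.2 g₀ hg₀.1 hgb'
    have hab' : a' = b' := he1.symm.trans he2
    have ha'le : ∀ g ∈ supportedOn I i j, a' ≤ g := by
      intro g hg w
      by_cases hwi : w = i
      · subst hwi; exact hmini g hg
      · by_cases hwj : w = j
        · subst hwj; rw [hab']; exact hminj g hg
        · rw [so0 a' ha' w hwi hwj]; exact Nat.zero_le _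
    have hea : a' = a := ha.1.2 a' ha'.1.1 (ha'le a ha)
    have heb : a' = b := hb.1.2 a' ha'.1.1 (ha'le b hb)
    exact hab (hea.symm.trans heb)
  have hmnotI : (monomial m (1:K)) ∉ I := by
    intro hmem
    obtain ⟨g₀, hg₀, hg₀m⟩ := (mono_mem_iff hmon).mp hmem
    obtain ⟨u, v, huv, hsup⟩ := exists_pair_of_minGen h2 hg₀
    have hloc : ∀ w ∈ g₀.support, w = i ∨ w = j ∨ ∃ k ∈ F, w = t k := by
      intro w hw
      by_contra hcon
      push_neg at hcon
      obtain ⟨hwi, hwj, hwk⟩ := hcon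
      have h0 : m w = 0 := hm0 w hwi hwj hwk
      have h1 : 1 ≤ g₀ w := (Finsupp.mem_support_iff.mp hw).bot_lt
      have h2' := hg₀m w
      omega
    have hadjuv : G.Adj u v := adj_of_minGen hg₀ huv hsup
    have hu := hloc u (by rw [hsup]; simp)
    have hv := hloc v (by rw [hsup]; simp)
    have noedge_jt : ∀ k ∈ F, ¬ G.Adj j (t k) := by
      intro k hk hadj
      exact cyc4 hgirth hadjij.symm (hadjik k hk) (hkprop k hk).1 hadj.symm
        (fun h => (hknej k hk) h.symm) (fun h => (htnei k hk) h.symm)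
    have noedge_tt : ∀ k ∈ F, ∀ k' ∈ F, t k ≠ t k' → ¬ G.Adj (t k) (t k') := by
      intro k hk k' hk' hne hadj
      have hkk' : k ≠ k' := by rintro rfl; exact hne rfl
      exact cyc5 hgirth (hadjik k hk) (hkprop k hk).1 hadj (hkprop k' hk').1.symm
        (hadjik k' hk').symm (fun h => (htnei k hk) h.symm) (fun h => (htnei k' hk') h.symm)
        (hknt k hk k' hk') hkk' (fun h => (hknt k' hk' k hk) h.symm)
    have hedge : (u = i ∧ v = j) ∨ (u = j ∧ v = i) := by
      rcases hu with rfl | rfl | ⟨k, hk, rfl⟩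
      · rcases hv with rfl | rfl | ⟨k', hk', rfl⟩
        · exact absurd rfl hadjuv.ne
        · exact Or.inl ⟨rfl, rfl⟩
        · exact absurd hadjuv (htnotadj k' hk')
      · rcases hv with rfl | rfl | ⟨k', hk', rfl⟩
        · exact Or.inr ⟨rfl, rfl⟩
        · exact absurd rfl hadjuv.ne
        · exact absurd hadjuv (noedge_jt k' hk')
      · rcases hv with rfl | rfl | ⟨k', hk', rfl⟩
        · exact absurd hadjuv.symm (htnotadj k hk)
        · exact absurd hadjuv.symm (noedge_jt k hk)
        · exact absurd hadjuv (noedge_tt k hk k' hk' hadjuv.ne)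
    rcases hedge with ⟨rfl, rfl⟩ | ⟨rfl, rfl⟩
    · exact hfinal g₀ hg₀ hsup hg₀m
    · exact hfinal g₀ hg₀ (by rw [hsup, Finset.pair_comm]) hg₀m
  -- the witness monomial is in the symbolic power
  have hmem : (monomial m (1:K)) ∈ symbolicPower I 1 := by
    apply mem_symbolicPower_one
    intro P hP
    obtain ⟨hcov, hmin⟩ := minimalPrime_structure hmon h2 hP
    have hPp : P.IsPrime := hP.1.1
    by_cases hiC : (X i : MvPolynomial (Fin n) K) ∈ P
    · by_cases hjC : (X j : MvPolynomial (Fin n) K) ∈ P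
      · -- both i and j are in the cover: use minimality at i
        obtain ⟨w, hadj, hwP⟩ := hmin i hiC
        have hwj : w ≠ j := fun h => hwP (h ▸ hjC)
        have hwF : w ∈ F := (hFmem w).mpr ⟨hadj, hwj⟩
        refine ⟨X w ^ (gg w w), fun hp => hwP (hPp.mem_of_pow_mem _ hp), ?_⟩
        rw [X_pow_eq_monomial, monomial_mul, one_mul]
        apply mono_mem_of_le (hkprop w hwF).2.2.1.1
        intro z
        rw [Finsupp.add_apply, Finsupp.single_apply]
        by_cases hzw : z = w
        · subst hzw
          rw [if_pos rfl]
          exact Nat.le_add_right _ _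
        · by_cases hzt : z = t w
          · subst hzt
            rw [if_neg ((hkprop w hwF).1.ne), hmt w hwF]
            omega
          · rw [support_pair_apply_eq_zero (hkprop w hwF).2.2.2 hzw hzt]
            exact Nat.zero_le _
      · -- j not in the cover: use the generator a'
        refine ⟨X j ^ (a' j), fun hp => hjC (hPp.mem_of_pow_mem _ hp), ?_⟩
        rw [X_pow_eq_monomial, monomial_mul, one_mul]
        apply mono_mem_of_le ha'.1.1
        intro z
        rw [Finsupp.add_apply, Finsupp.single_apply]
        by_cases hzi : z = i
        · subst hzi
          rw [if_neg (fun h => hij h.symm), hmi]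
          omega
        · by_cases hzj : z = j
          · subst hzj
            rw [if_pos rfl]
            exact Nat.le_add_right _ _
          · rw [so0 a' ha' z hzi hzj]
            exact Nat.zero_le _
    · -- i not in the cover: use the generator b'
      refine ⟨X i ^ (b' i), fun hp => hiC (hPp.mem_of_pow_mem _ hp), ?_⟩
      rw [X_pow_eq_monomial, monomial_mul, one_mul]
      apply mono_mem_of_le hb'.1.1
      intro z
      rw [Finsupp.add_apply, Finsupp.single_apply]
      by_cases hzi : z = i
      · subst hzi
        rw [if_pos rfl]
        exact Nat.le_add_right _ _
      · by_cases hzj : z = j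
        · subst hzj
          rw [if_neg (fun h => hij h), hmj]
          omega
        · rw [so0 b' hb' z hzi hzj]
          exact Nat.zero_le _
  intro heq
  rw [heq] at hmem
  exact hmnotI hmem

end MainLemma

theorem stmt5 {K : Type*} [Field K] {n : ℕ} (I : Ideal (MvPolynomial (Fin n) K))
    (hmon : IsMonomialIdeal I) (h2 : IsSupportTwo I)
    (hgirth : 6 ≤ (underGraph I).egirth)
    (i j : Fin n) (a b : Fin n →₀ ℕ) (ha : a ∈ supportedOn I i j)
    (hb : b ∈ supportedOn I i j) (hab : a ≠ b)
    (hleaf :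
      (∀ ℓ : Fin n, ((underGraph I).neighborSet ℓ).ncard = 1 →
        2 ≤ (underGraph I).dist i ℓ) ∨
      (∀ ℓ : Fin n, ((underGraph I).neighborSet ℓ).ncard = 1 →
        2 ≤ (underGraph I).dist j ℓ)) :
    symbolicPower I 1 ≠ I := by
  rcases hleaf with hl | hl
  · exact key_lemma I hmon h2 hgirth i j a b ha hb hab hl
  · have ha' : a ∈ supportedOn I j i := ⟨ha.1, by rw [ha.2, Finset.pair_comm]⟩
    have hb' : b ∈ supportedOn I j i := ⟨hb.1, by rw [hb.2, Finset.pair_comm]⟩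
    exact key_lemma I hmon h2 hgirth j i a b ha' hb' hab hl
end

section
/- Let I = ⟨x1 x2², x2 x3, x3² x4⟩ ⊆ K[x1,x2,x3,x4], with minimal primes P1 = ⟨x1,x3⟩ and P2 = ⟨x2,x4⟩ and third primary component Q3 = ⟨x2², x2 x3, x3²⟩ (with radical ⟨x2,x3⟩). Then for all s ≥ 1, I^s = P1^s ∩ P2^s ∩ Q3^s; that is, I is a Simis ideal. -/
set_option synthInstance.maxHeartbeats 1000000
set_option maxHeartbeats 1000000

open MvPolynomial

section StmtTenAux

open Finsupp

private lemma stmt10_combin (a b c d s : ℕ) (h1 : s ≤ a + c) (h2 : s ≤ b + d)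
    (h3 : 2 * s ≤ b + c) :
    ∃ p q r : ℕ, p + q + r = s ∧ p ≤ a ∧ 2 * p + q ≤ b ∧ q + 2 * r ≤ c ∧ r ≤ d := by
  rcases le_or_gt s c with h | h
  · exact ⟨0, s - min (min d s) (c - s), min (min d s) (c - s), by omega⟩
  · exact ⟨s - c, c, 0, by omega⟩

/-- Auxiliary monomial ideal: monomials with `a i + a j ≥ t`. -/
private noncomputable def stmt10M (K : Type*) [Field K] (i j : Fin 4) (t : ℕ) :
    Ideal (MvPolynomial (Fin 4) K) :=
  Ideal.span ((fun a => (monomial a (1 : K) : MvPolynomial (Fin 4) K)) ''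
    {a : Fin 4 →₀ ℕ | t ≤ a i + a j})

private lemma stmt10M_mul_le {K : Type*} [Field K] (i j : Fin 4) (t u : ℕ) :
    stmt10M K i j t * stmt10M K i j u ≤ stmt10M K i j (t + u) := by
  rw [Ideal.mul_le]
  intro f hf g hg
  rw [stmt10M, mem_ideal_span_monomial_image] at hf hg ⊢
  intro m hm
  obtain ⟨m1, hm1, m2, hm2, rfl⟩ := Finset.mem_add.mp (support_mul f g hm)
  obtain ⟨a1, ha1, hle1⟩ := hf m1 hm1
  obtain ⟨a2, ha2, hle2⟩ := hg m2 hm2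
  refine ⟨a1 + a2, ?_, add_le_add hle1 hle2⟩
  simp only [Set.mem_setOf_eq, Finsupp.add_apply] at ha1 ha2 ⊢
  omega

private lemma stmt10M_pow {K : Type*} [Field K] {Q : Ideal (MvPolynomial (Fin 4) K)}
    {i j : Fin 4} {t : ℕ} (hQ : Q ≤ stmt10M K i j t) :
    ∀ n : ℕ, Q ^ n ≤ stmt10M K i j (n * t) := by
  intro n
  induction n with
  | zero =>
    intro x _
    rw [stmt10M, mem_ideal_span_monomial_image]
    intro m _
    exact ⟨0, by simp, zero_le⟩
  | succ n ih =>
    rw [pow_succ]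
    calc Q ^ n * Q ≤ stmt10M K i j (n * t) * stmt10M K i j t := Ideal.mul_mono ih hQ
      _ ≤ stmt10M K i j (n * t + t) := stmt10M_mul_le i j _ _
      _ = stmt10M K i j ((n + 1) * t) := by ring_nf

private lemma stmt10_X_eq {K : Type*} [Field K] (n : Fin 4) :
    (X n : MvPolynomial (Fin 4) K) = monomial (Finsupp.single n 1) 1 := by
  rw [← X_pow_eq_monomial, pow_one]

end StmtTenAux

theorem stmt10 {K : Type*} [Field K]
    (I Q1 Q2 Q3 : Ideal (MvPolynomial (Fin 4) K))
    (hI : I = Ideal.span {X 0 * X 1 ^ 2, X 1 * X 2, X 2 ^ 2 * X 3})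
    (hQ1 : Q1 = Ideal.span {X 0, X 2})
    (hQ2 : Q2 = Ideal.span {X 1, X 3})
    (hQ3 : Q3 = Ideal.span {X 1 ^ 2, X 1 * X 2, X 2 ^ 2}) :
    ∀ s : ℕ, 1 ≤ s → I ^ s = Q1 ^ s ⊓ Q2 ^ s ⊓ Q3 ^ s := by
  subst hI hQ1 hQ2 hQ3
  intro s hs
  set A : Finsupp (Fin 4) ℕ := Finsupp.single 0 1 + Finsupp.single 1 2 with hA
  set B : Finsupp (Fin 4) ℕ := Finsupp.single 1 1 + Finsupp.single 2 1 with hB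
  set Cc : Finsupp (Fin 4) ℕ := Finsupp.single 2 2 + Finsupp.single 3 1 with hCc
  have hgenA : (X 0 * X 1 ^ 2 : MvPolynomial (Fin 4) K) ∈
      Ideal.span {X 0 * X 1 ^ 2, X 1 * X 2, X 2 ^ 2 * X 3} :=
    Ideal.subset_span (by simp)
  have hgenB : (X 1 * X 2 : MvPolynomial (Fin 4) K) ∈
      Ideal.span {X 0 * X 1 ^ 2, X 1 * X 2, X 2 ^ 2 * X 3} :=
    Ideal.subset_span (by simp)
  have hgenC : (X 2 ^ 2 * X 3 : MvPolynomial (Fin 4) K) ∈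
      Ideal.span {X 0 * X 1 ^ 2, X 1 * X 2, X 2 ^ 2 * X 3} :=
    Ideal.subset_span (by simp)
  apply le_antisymm
  · -- easy direction
    have h2 : (X 2 : MvPolynomial (Fin 4) K) ∈ Ideal.span {X 0, X 2} :=
      Ideal.subset_span (by simp)
    have h0 : (X 0 : MvPolynomial (Fin 4) K) ∈ Ideal.span {X 0, X 2} :=
      Ideal.subset_span (by simp)
    have h1 : (X 1 : MvPolynomial (Fin 4) K) ∈ Ideal.span {X 1, X 3} :=
      Ideal.subset_span (by simp)
    have h3 : (X 3 : MvPolynomial (Fin 4) K) ∈ Ideal.span {X 1, X 3} :=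
      Ideal.subset_span (by simp)
    refine le_inf (le_inf ?_ ?_) ?_ <;> apply Ideal.pow_right_mono <;>
      rw [Ideal.span_le] <;> intro m hm <;>
      simp only [Set.mem_insert_iff, Set.mem_singleton_iff] at hm <;>
      rcases hm with rfl | rfl | rfl
    · exact Ideal.mul_mem_right _ _ h0
    · exact Ideal.mul_mem_left _ _ h2
    · rw [show (X 2 ^ 2 * X 3 : MvPolynomial (Fin 4) K) = X 2 * (X 2 * X 3) by ring]
      exact Ideal.mul_mem_right _ _ h2
    · rw [show (X 0 * X 1 ^ 2 : MvPolynomial (Fin 4) K) = X 1 * (X 0 * X 1) by ring]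
      exact Ideal.mul_mem_right _ _ h1
    · exact Ideal.mul_mem_right _ _ h1
    · exact Ideal.mul_mem_left _ _ h3
    · rw [show (X 0 * X 1 ^ 2 : MvPolynomial (Fin 4) K) = X 1 ^ 2 * X 0 by ring]
      exact Ideal.mul_mem_right _ _ (Ideal.subset_span (by simp))
    · exact Ideal.subset_span (by simp)
    · exact Ideal.mul_mem_right _ _ (Ideal.subset_span (by simp))
  · -- hard direction
    intro f hf
    have hf1 := (Ideal.mem_inf.mp (Ideal.mem_inf.mp hf).1).1
    have hf2 := (Ideal.mem_inf.mp (Ideal.mem_inf.mp hf).1).2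
    have hf3 := (Ideal.mem_inf.mp hf).2
    have hQ1le : Ideal.span {(X 0 : MvPolynomial (Fin 4) K), X 2} ≤ stmt10M K 0 2 1 := by
      rw [Ideal.span_le]
      rintro m hm
      simp only [Set.mem_insert_iff, Set.mem_singleton_iff] at hm
      rcases hm with rfl | rfl <;> rw [stmt10_X_eq] <;>
        exact Ideal.subset_span ⟨_, by simp [Finsupp.single_apply], rfl⟩
    have hQ2le : Ideal.span {(X 1 : MvPolynomial (Fin 4) K), X 3} ≤ stmt10M K 1 3 1 := by
      rw [Ideal.span_le]
      rintro m hm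
      simp only [Set.mem_insert_iff, Set.mem_singleton_iff] at hm
      rcases hm with rfl | rfl <;> rw [stmt10_X_eq] <;>
        exact Ideal.subset_span ⟨_, by simp [Finsupp.single_apply], rfl⟩
    have hQ3le : Ideal.span {(X 1 ^ 2 : MvPolynomial (Fin 4) K), X 1 * X 2, X 2 ^ 2} ≤
        stmt10M K 1 2 2 := by
      rw [Ideal.span_le]
      rintro m hm
      simp only [Set.mem_insert_iff, Set.mem_singleton_iff] at hm
      rcases hm with rfl | rfl | rfl
      · rw [X_pow_eq_monomial]
        exact Ideal.subset_span ⟨_, by simp [Finsupp.single_apply], rfl⟩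
      · rw [stmt10_X_eq, stmt10_X_eq, monomial_mul, one_mul]
        exact Ideal.subset_span ⟨_, by simp [Finsupp.single_apply], rfl⟩
      · rw [X_pow_eq_monomial]
        exact Ideal.subset_span ⟨_, by simp [Finsupp.single_apply], rfl⟩
    have H1 := stmt10M_pow hQ1le s hf1
    have H2 := stmt10M_pow hQ2le s hf2
    have H3 := stmt10M_pow hQ3le s hf3
    rw [stmt10M, mem_ideal_span_monomial_image] at H1 H2 H3
    rw [as_sum f]
    apply Ideal.sum_mem
    intro m hm
    obtain ⟨a1, ha1, hle1⟩ := H1 m hm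
    obtain ⟨a2, ha2, hle2⟩ := H2 m hm
    obtain ⟨a3, ha3, hle3⟩ := H3 m hm
    simp only [Set.mem_setOf_eq] at ha1 ha2 ha3
    have hm02 : s ≤ m 0 + m 2 := by
      have := Finsupp.le_def.mp hle1 0
      have := Finsupp.le_def.mp hle1 2
      omega
    have hm13 : s ≤ m 1 + m 3 := by
      have := Finsupp.le_def.mp hle2 1
      have := Finsupp.le_def.mp hle2 3
      omega
    have hm12 : 2 * s ≤ m 1 + m 2 := by
      have := Finsupp.le_def.mp hle3 1
      have := Finsupp.le_def.mp hle3 2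
      omega
    obtain ⟨p, q, r, hpqr, hp, hq, hr, hd⟩ :=
      stmt10_combin (m 0) (m 1) (m 2) (m 3) s hm02 hm13 hm12
    set g : Finsupp (Fin 4) ℕ := p • A + q • B + r • Cc with hg
    have hgle : g ≤ m := by
      rw [Finsupp.le_def]
      intro i
      have hi : i = 0 ∨ i = 1 ∨ i = 2 ∨ i = 3 := by fin_cases i <;> simp
      rcases hi with rfl | rfl | rfl | rfl <;>
        simp (config := { decide := true }) only [hg, hA, hB, hCc, Finsupp.add_apply,
          Finsupp.smul_apply, Finsupp.single_apply, smul_eq_mul, if_true, if_false] <;>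
        omega
    have hmono : (monomial g (1 : K) : MvPolynomial (Fin 4) K) =
        (X 0 * X 1 ^ 2) ^ p * (X 1 * X 2) ^ q * (X 2 ^ 2 * X 3) ^ r := by
      rw [X_pow_eq_monomial, X_pow_eq_monomial, stmt10_X_eq 0, stmt10_X_eq 1,
        stmt10_X_eq 2, stmt10_X_eq 3]
      simp only [monomial_mul, monomial_pow, one_mul, mul_one, one_pow, hg, hA, hB, hCc]
    have hmem : (monomial g (1 : K) : MvPolynomial (Fin 4) K) ∈
        Ideal.span {(X 0 * X 1 ^ 2 : MvPolynomial (Fin 4) K), X 1 * X 2, X 2 ^ 2 * X 3} ^ s := by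
      rw [hmono, ← hpqr, pow_add, pow_add]
      exact Ideal.mul_mem_mul (Ideal.mul_mem_mul (Ideal.pow_mem_pow hgenA p)
        (Ideal.pow_mem_pow hgenB q)) (Ideal.pow_mem_pow hgenC r)
    have : (monomial m (coeff m f) : MvPolynomial (Fin 4) K) =
        monomial (m - g) (coeff m f) * monomial g 1 := by
      rw [monomial_mul, mul_one, tsub_add_cancel_of_le hgle]
    rw [this]
    exact Ideal.mul_mem_left _ _ hmem
end

section
/- Let I = ⟨x1 x2⁴, x2⁴ x3, x2 x3⁴, x3⁴ x4⟩ ⊆ K[x1,x2,x3,x4]. Then I = ⟨x1, x3⟩ ∩ ⟨x2, x4⟩ ∩ ⟨x2⁴, x3⁴⟩ is its irreducible decomposition (which is minimal), and the monomial x2⁴ x3⁴ lies in I^{(2)} = (⟨x1,x3⟩² ∩ ⟨x2,x4⟩² ∩ ⟨x2⁴,x3⁴⟩²) but not in I², so I^{(2)} ≠ I². -/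
set_option synthInstance.maxHeartbeats 1000000
set_option maxHeartbeats 1000000

open MvPolynomial

section Stmt11Aux
open Finsupp
variable {K : Type*} [Field K]

lemma le4' {a b : Fin 4 →₀ ℕ} : a ≤ b ↔ a 0 ≤ b 0 ∧ a 1 ≤ b 1 ∧ a 2 ≤ b 2 ∧ a 3 ≤ b 3 := by
  rw [Finsupp.le_def]
  exact ⟨fun h => ⟨h 0, h 1, h 2, h 3⟩, fun h i => by fin_cases i <;> tauto⟩

lemma sq_le' (S : Set (Fin 4 →₀ ℕ)) :
    (Ideal.span ((fun a => (monomial a (1:K) : MvPolynomial (Fin 4) K)) '' S)) ^ 2 ≤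
    Ideal.span ((fun a => (monomial a (1:K) : MvPolynomial (Fin 4) K)) ''
      {w | ∃ u ∈ S, ∃ v ∈ S, w = u + v}) := by
  rw [pow_two, Ideal.mul_le]
  intro r hr s hs
  rw [mem_ideal_span_monomial_image] at hr hs ⊢
  intro xi hxi
  have hx := MvPolynomial.support_mul r s hxi
  rw [Finset.mem_add] at hx
  obtain ⟨u, hu, v, hv, rfl⟩ := hx
  obtain ⟨a, ha, hau⟩ := hr u hu
  obtain ⟨b, hb, hbv⟩ := hs v hv
  exact ⟨a + b, ⟨a, ha, b, hb, rfl⟩, add_le_add hau hbv⟩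

end Stmt11Aux

theorem stmt11 {K : Type*} [Field K]
    (I Q1 Q2 Q3 : Ideal (MvPolynomial (Fin 4) K))
    (hI : I = Ideal.span {X 0 * X 1 ^ 4, X 1 ^ 4 * X 2, X 1 * X 2 ^ 4, X 2 ^ 4 * X 3})
    (hQ1 : Q1 = Ideal.span {X 0, X 2})
    (hQ2 : Q2 = Ideal.span {X 1, X 3})
    (hQ3 : Q3 = Ideal.span {X 1 ^ 4, X 2 ^ 4}) :
    I = Q1 ⊓ Q2 ⊓ Q3 ∧
    IsIrredMonomialIdeal Q1 ∧ IsIrredMonomialIdeal Q2 ∧ IsIrredMonomialIdeal Q3 ∧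
    Q1.radical ≠ Q2.radical ∧ Q1.radical ≠ Q3.radical ∧ Q2.radical ≠ Q3.radical ∧
    Q1 ⊓ Q2 ≠ I ∧ Q1 ⊓ Q3 ≠ I ∧ Q2 ⊓ Q3 ≠ I ∧
    (X 1 ^ 4 * X 2 ^ 4 : MvPolynomial (Fin 4) K) ∈ Q1 ^ 2 ⊓ Q2 ^ 2 ⊓ Q3 ^ 2 ∧
    (X 1 ^ 4 * X 2 ^ 4 : MvPolynomial (Fin 4) K) ∉ I ^ 2 ∧
    Q1 ^ 2 ⊓ Q2 ^ 2 ⊓ Q3 ^ 2 ≠ I ^ 2 := by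
  have e1 : (X 0 * X 1 ^ 4 : MvPolynomial (Fin 4) K)
      = monomial (Finsupp.single 0 1 + Finsupp.single 1 4) 1 := by
    rw [← pow_one (X 0), X_pow_eq_monomial, X_pow_eq_monomial, monomial_mul, one_mul]
  have e2 : (X 1 ^ 4 * X 2 : MvPolynomial (Fin 4) K)
      = monomial (Finsupp.single 1 4 + Finsupp.single 2 1) 1 := by
    rw [← pow_one (X 2), X_pow_eq_monomial, X_pow_eq_monomial, monomial_mul, one_mul]
  have e3 : (X 1 * X 2 ^ 4 : MvPolynomial (Fin 4) K)
      = monomial (Finsupp.single 1 1 + Finsupp.single 2 4) 1 := by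
    rw [← pow_one (X 1), X_pow_eq_monomial, X_pow_eq_monomial, monomial_mul, one_mul]
  have e4 : (X 2 ^ 4 * X 3 : MvPolynomial (Fin 4) K)
      = monomial (Finsupp.single 2 4 + Finsupp.single 3 1) 1 := by
    rw [← pow_one (X 3), X_pow_eq_monomial, X_pow_eq_monomial, monomial_mul, one_mul]
  have eX : ∀ i : Fin 4, (X i : MvPolynomial (Fin 4) K) = monomial (Finsupp.single i 1) 1 :=
    fun i => by rw [← pow_one (X i), X_pow_eq_monomial]
  have hI' : I = Ideal.span ((fun a => (monomial a (1:K) : MvPolynomial (Fin 4) K)) ''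
      {Finsupp.single 0 1 + Finsupp.single 1 4, Finsupp.single 1 4 + Finsupp.single 2 1,
       Finsupp.single 1 1 + Finsupp.single 2 4, Finsupp.single 2 4 + Finsupp.single 3 1}) := by
    rw [hI, e1, e2, e3, e4, Set.image_insert_eq, Set.image_insert_eq, Set.image_insert_eq,
      Set.image_singleton]
  have hQ1' : Q1 = Ideal.span ((fun a => (monomial a (1:K) : MvPolynomial (Fin 4) K)) ''
      {Finsupp.single 0 1, Finsupp.single 2 1}) := by
    rw [hQ1, eX 0, eX 2, Set.image_insert_eq, Set.image_singleton]
  have hQ2' : Q2 = Ideal.span ((fun a => (monomial a (1:K) : MvPolynomial (Fin 4) K)) ''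
      {Finsupp.single 1 1, Finsupp.single 3 1}) := by
    rw [hQ2, eX 1, eX 3, Set.image_insert_eq, Set.image_singleton]
  have hQ3' : Q3 = Ideal.span ((fun a => (monomial a (1:K) : MvPolynomial (Fin 4) K)) ''
      {Finsupp.single 1 4, Finsupp.single 2 4}) := by
    rw [hQ3, X_pow_eq_monomial, X_pow_eq_monomial, Set.image_insert_eq, Set.image_singleton]
  -- main equality
  have hmain : I = Q1 ⊓ Q2 ⊓ Q3 := by
    ext p
    rw [hI', hQ1', hQ2', hQ3']
    simp only [Submodule.mem_inf, mem_ideal_span_monomial_image]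
    constructor
    · intro h
      refine ⟨⟨fun xi hxi => ?_, fun xi hxi => ?_⟩, fun xi hxi => ?_⟩ <;>
      · obtain ⟨s, hs, hle⟩ := h xi hxi
        simp only [Set.mem_insert_iff, Set.mem_singleton_iff] at hs
        simp only [Set.mem_insert_iff, Set.mem_singleton_iff, exists_eq_or_imp, exists_eq_left]
        rcases hs with rfl | rfl | rfl | rfl <;>
          first
            | (simp [le4', Finsupp.single_apply] at hle ⊢; omega)
            | simp [le4', Finsupp.single_apply] at hle ⊢
            | omega
    · rintro ⟨⟨h1, h2⟩, h3⟩ xi hxi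
      obtain ⟨s, hs, hle1⟩ := h1 xi hxi
      obtain ⟨t, ht, hle2⟩ := h2 xi hxi
      obtain ⟨u, hu, hle3⟩ := h3 xi hxi
      simp only [Set.mem_insert_iff, Set.mem_singleton_iff] at hs ht hu
      simp only [Set.mem_insert_iff, Set.mem_singleton_iff, exists_eq_or_imp, exists_eq_left]
      rcases hs with rfl | rfl <;> rcases ht with rfl | rfl <;> rcases hu with rfl | rfl <;>
        first
          | (simp [le4', Finsupp.single_apply] at hle1 hle2 hle3 ⊢; omega)
          | simp [le4', Finsupp.single_apply] at hle1 hle2 hle3 ⊢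
          | omega
  -- simple memberships
  have hX0Q1 : (X 0 : MvPolynomial (Fin 4) K) ∈ Q1 := hQ1 ▸ Ideal.subset_span (by simp)
  have hX2Q1 : (X 2 : MvPolynomial (Fin 4) K) ∈ Q1 := hQ1 ▸ Ideal.subset_span (by simp)
  have hX1Q2 : (X 1 : MvPolynomial (Fin 4) K) ∈ Q2 := hQ2 ▸ Ideal.subset_span (by simp)
  have hX3Q2 : (X 3 : MvPolynomial (Fin 4) K) ∈ Q2 := hQ2 ▸ Ideal.subset_span (by simp)
  have hX14Q3 : (X 1 ^ 4 : MvPolynomial (Fin 4) K) ∈ Q3 := hQ3 ▸ Ideal.subset_span (by simp)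
  have hX24Q3 : (X 2 ^ 4 : MvPolynomial (Fin 4) K) ∈ Q3 := hQ3 ▸ Ideal.subset_span (by simp)
  -- generic non-membership in I
  have notI : ∀ a : Fin 4 →₀ ℕ,
      (¬ (1 ≤ a 0 ∧ 4 ≤ a 1)) → (¬ (4 ≤ a 1 ∧ 1 ≤ a 2)) → (¬ (1 ≤ a 1 ∧ 4 ≤ a 2)) →
      (¬ (4 ≤ a 2 ∧ 1 ≤ a 3)) → (monomial a (1:K) : MvPolynomial (Fin 4) K) ∉ I := by
    intro a h1 h2 h3 h4 hmem
    rw [hI', mem_ideal_span_monomial_image] at hmem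
    obtain ⟨s, hs, hle⟩ := hmem a (by simp [support_monomial])
    simp only [Set.mem_insert_iff, Set.mem_singleton_iff] at hs
    rcases hs with rfl | rfl | rfl | rfl <;>
      first
        | (simp [le4', Finsupp.single_apply] at hle; omega)
        | simp [le4', Finsupp.single_apply] at hle
        | omega
  -- radical facts
  have radQ1 : (X 0 : MvPolynomial (Fin 4) K) ∈ Q1.radical := Ideal.le_radical hX0Q1
  have radQ2' : (X 0 : MvPolynomial (Fin 4) K) ∉ Q2.radical := by
    intro hr
    rw [Ideal.mem_radical_iff] at hr
    obtain ⟨n, hn⟩ := hr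
    rw [X_pow_eq_monomial, hQ2', mem_ideal_span_monomial_image] at hn
    obtain ⟨s, hs, hle⟩ := hn (Finsupp.single 0 n) (by simp [support_monomial])
    simp only [Set.mem_insert_iff, Set.mem_singleton_iff] at hs
    rcases hs with rfl | rfl <;> simp [le4', Finsupp.single_apply] at hle
  have radQ3' : (X 0 : MvPolynomial (Fin 4) K) ∉ Q3.radical := by
    intro hr
    rw [Ideal.mem_radical_iff] at hr
    obtain ⟨n, hn⟩ := hr
    rw [X_pow_eq_monomial, hQ3', mem_ideal_span_monomial_image] at hn
    obtain ⟨s, hs, hle⟩ := hn (Finsupp.single 0 n) (by simp [support_monomial])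
    simp only [Set.mem_insert_iff, Set.mem_singleton_iff] at hs
    rcases hs with rfl | rfl <;> simp [le4', Finsupp.single_apply] at hle
  have radQ2 : (X 3 : MvPolynomial (Fin 4) K) ∈ Q2.radical := Ideal.le_radical hX3Q2
  have radQ3'' : (X 3 : MvPolynomial (Fin 4) K) ∉ Q3.radical := by
    intro hr
    rw [Ideal.mem_radical_iff] at hr
    obtain ⟨n, hn⟩ := hr
    rw [X_pow_eq_monomial, hQ3', mem_ideal_span_monomial_image] at hn
    obtain ⟨s, hs, hle⟩ := hn (Finsupp.single 3 n) (by simp [support_monomial])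
    simp only [Set.mem_insert_iff, Set.mem_singleton_iff] at hs
    rcases hs with rfl | rfl <;> simp [le4', Finsupp.single_apply] at hle
  -- the key element
  have e5 : (X 1 ^ 4 * X 2 ^ 4 : MvPolynomial (Fin 4) K)
      = monomial (Finsupp.single 1 4 + Finsupp.single 2 4) 1 := by
    rw [X_pow_eq_monomial, X_pow_eq_monomial, monomial_mul, one_mul]
  have hsq : (X 1 ^ 4 * X 2 ^ 4 : MvPolynomial (Fin 4) K) ∈ Q1 ^ 2 ⊓ Q2 ^ 2 ⊓ Q3 ^ 2 := by
    refine Submodule.mem_inf.2 ⟨Submodule.mem_inf.2 ⟨?_, ?_⟩, ?_⟩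
    · have h22 : (X 2 * X 2 : MvPolynomial (Fin 4) K) ∈ Q1 ^ 2 := by
        rw [pow_two]; exact Ideal.mul_mem_mul hX2Q1 hX2Q1
      have : (X 1 ^ 4 * X 2 ^ 4 : MvPolynomial (Fin 4) K)
          = (X 1 ^ 4 * X 2 ^ 2) * (X 2 * X 2) := by ring
      rw [this]; exact Ideal.mul_mem_left _ _ h22
    · have h11 : (X 1 * X 1 : MvPolynomial (Fin 4) K) ∈ Q2 ^ 2 := by
        rw [pow_two]; exact Ideal.mul_mem_mul hX1Q2 hX1Q2
      have : (X 1 ^ 4 * X 2 ^ 4 : MvPolynomial (Fin 4) K)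
          = (X 1 ^ 2 * X 2 ^ 4) * (X 1 * X 1) := by ring
      rw [this]; exact Ideal.mul_mem_left _ _ h11
    · rw [pow_two]; exact Ideal.mul_mem_mul hX14Q3 hX24Q3
  have hnsq : (X 1 ^ 4 * X 2 ^ 4 : MvPolynomial (Fin 4) K) ∉ I ^ 2 := by
    intro hmem
    rw [hI'] at hmem
    have h2 := sq_le' _ hmem
    rw [mem_ideal_span_monomial_image] at h2
    obtain ⟨s, hs, hle⟩ := h2 (Finsupp.single 1 4 + Finsupp.single 2 4)
      (by rw [e5]; simp [support_monomial])
    obtain ⟨u, hu, v, hv, rfl⟩ := hs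
    simp only [Set.mem_insert_iff, Set.mem_singleton_iff] at hu hv
    rcases hu with rfl | rfl | rfl | rfl <;> rcases hv with rfl | rfl | rfl | rfl <;>
      first
        | (simp [le4', Finsupp.single_apply] at hle; omega)
        | simp [le4', Finsupp.single_apply] at hle
        | omega
  refine ⟨hmain, ?_, ?_, ?_, ?_, ?_, ?_, ?_, ?_, ?_, hsq, hnsq, fun h => hnsq (h ▸ hsq)⟩
  · exact ⟨{0, 2}, fun _ => 1, fun i _ => le_refl 1, by
      rw [hQ1]; congr 1; simp [Set.image_insert_eq]⟩
  · exact ⟨{1, 3}, fun _ => 1, fun i _ => le_refl 1, by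
      rw [hQ2]; congr 1; simp [Set.image_insert_eq]⟩
  · exact ⟨{1, 2}, fun _ => 4, fun i _ => by norm_num, by
      rw [hQ3]; congr 1; simp [Set.image_insert_eq]⟩
  · exact fun h => radQ2' (h ▸ radQ1)
  · exact fun h => radQ3' (h ▸ radQ1)
  · exact fun h => radQ3'' (h ▸ radQ2)
  · -- Q1 ⊓ Q2 ≠ I
    intro h
    have hm : (X 0 * X 1 : MvPolynomial (Fin 4) K) ∈ Q1 ⊓ Q2 :=
      Submodule.mem_inf.2 ⟨Ideal.mul_mem_right _ _ hX0Q1, Ideal.mul_mem_left _ _ hX1Q2⟩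
    have hni : (X 0 * X 1 : MvPolynomial (Fin 4) K) ∉ I := by
      have e01 : (X 0 * X 1 : MvPolynomial (Fin 4) K)
          = monomial (Finsupp.single 0 1 + Finsupp.single 1 1) 1 := by
        rw [← pow_one (X 0), ← pow_one (X 1), X_pow_eq_monomial, X_pow_eq_monomial,
          monomial_mul, one_mul]
      rw [e01]
      exact notI _ (by simp [Finsupp.single_apply]) (by simp [Finsupp.single_apply])
        (by simp [Finsupp.single_apply]) (by simp [Finsupp.single_apply])
    exact hni (h ▸ hm)
  · -- Q1 ⊓ Q3 ≠ I
    intro h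
    have hm : (X 2 ^ 4 : MvPolynomial (Fin 4) K) ∈ Q1 ⊓ Q3 := by
      refine Submodule.mem_inf.2 ⟨?_, hX24Q3⟩
      have : (X 2 ^ 4 : MvPolynomial (Fin 4) K) = X 2 ^ 3 * X 2 := by ring
      rw [this]; exact Ideal.mul_mem_left _ _ hX2Q1
    have hni : (X 2 ^ 4 : MvPolynomial (Fin 4) K) ∉ I := by
      rw [X_pow_eq_monomial]
      exact notI _ (by simp [Finsupp.single_apply]) (by simp [Finsupp.single_apply])
        (by simp [Finsupp.single_apply]) (by simp [Finsupp.single_apply])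
    exact hni (h ▸ hm)
  · -- Q2 ⊓ Q3 ≠ I
    intro h
    have hm : (X 1 ^ 4 : MvPolynomial (Fin 4) K) ∈ Q2 ⊓ Q3 := by
      refine Submodule.mem_inf.2 ⟨?_, hX14Q3⟩
      have : (X 1 ^ 4 : MvPolynomial (Fin 4) K) = X 1 ^ 3 * X 1 := by ring
      rw [this]; exact Ideal.mul_mem_left _ _ hX1Q2
    have hni : (X 1 ^ 4 : MvPolynomial (Fin 4) K) ∉ I := by
      rw [X_pow_eq_monomial]
      exact notI _ (by simp [Finsupp.single_apply]) (by simp [Finsupp.single_apply])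
        (by simp [Finsupp.single_apply]) (by simp [Finsupp.single_apply])
    exact hni (h ▸ hm)
end

section
/- Let J = ⟨x1 x2⁴, x2³ x3, x2² x3², x2 x3³, x3⁴ x1⟩ ⊆ K[x1,x2,x3]. Then the minimal primary decomposition of J is J = ⟨x1, x2⟩ ∩ ⟨x1, x3⟩ ∩ ⟨x2⁴, x2³ x3, x2² x3², x2 x3³, x3⁴⟩, and J^{(s)} = J^s for all s ≥ 1, i.e., J is a Simis ideal. -/
set_option synthInstance.maxHeartbeats 1000000
set_option maxHeartbeats 1000000

open MvPolynomial

namespace S12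
open Pointwise
variable {K : Type*} [Field K]

noncomputable abbrev M (a : Fin 3 →₀ ℕ) : MvPolynomial (Fin 3) K := monomial a 1

noncomputable def E (a b c : ℕ) : Fin 3 →₀ ℕ :=
  Finsupp.single 0 a + Finsupp.single 1 b + Finsupp.single 2 c

@[simp] lemma E0 (a b c : ℕ) : E a b c 0 = a := by simp [E, Finsupp.single_apply]
@[simp] lemma E1 (a b c : ℕ) : E a b c 1 = b := by simp [E, Finsupp.single_apply]
@[simp] lemma E2 (a b c : ℕ) : E a b c 2 = c := by simp [E, Finsupp.single_apply]

lemma fin3cases (x : Fin 3) : x = 0 ∨ x = 1 ∨ x = 2 := by omega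

lemma eq_E (d : Fin 3 →₀ ℕ) : d = E (d 0) (d 1) (d 2) := by
  ext i
  rcases fin3cases i with h | h | h <;> subst h <;> simp

lemma E_le_iff {a b c : ℕ} {d : Fin 3 →₀ ℕ} :
    E a b c ≤ d ↔ a ≤ d 0 ∧ b ≤ d 1 ∧ c ≤ d 2 := by
  constructor
  · intro h
    exact ⟨by simpa using h 0, by simpa using h 1, by simpa using h 2⟩
  · rintro ⟨h0, h1, h2⟩ i
    rcases fin3cases i with h | h | h <;> subst h <;> simpa

lemma E_add (a b c a' b' c' : ℕ) :
    E a b c + E a' b' c' = E (a + a') (b + b') (c + c') := by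
  ext i
  rcases fin3cases i with h | h | h <;> subst h <;> simp

lemma le_iff3 {d e : Fin 3 →₀ ℕ} : d ≤ e ↔ d 0 ≤ e 0 ∧ d 1 ≤ e 1 ∧ d 2 ≤ e 2 := by
  rw [eq_E d, E_le_iff]; simp

/-- membership in a monomial ideal -/
lemma mem_span_mono_iff {G : Set (Fin 3 →₀ ℕ)} {p : MvPolynomial (Fin 3) K} :
    p ∈ Ideal.span ((fun a => (monomial a (1 : K) : MvPolynomial (Fin 3) K)) '' G) ↔
      ∀ d ∈ p.support, ∃ a ∈ G, a ≤ d := by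
  classical
  constructor
  · intro hp
    refine Submodule.span_induction ?_ ?_ ?_ ?_ hp
    · rintro x ⟨a, haG, rfl⟩ d hd
      rw [MvPolynomial.support_monomial] at hd
      simp only [one_ne_zero, if_false, Finset.mem_singleton] at hd
      exact ⟨a, haG, hd ▸ le_rfl⟩
    · intro d hd; simp at hd
    · intro x y _ _ hx hy d hd
      rcases Finset.mem_union.1 (MvPolynomial.support_add hd) with h | h
      · exact hx d h
      · exact hy d h
    · intro r x _ hx d hd
      have := MvPolynomial.support_mul r x (by simpa using hd)
      rcases Finset.mem_add.1 this with ⟨d1, hd1, d2, hd2, rfl⟩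
      obtain ⟨a, haG, ha⟩ := hx d2 hd2
      exact ⟨a, haG, ha.trans (le_add_self)⟩
  · intro h
    rw [p.as_sum]
    refine Ideal.sum_mem _ fun d hd => ?_
    obtain ⟨a, haG, hle⟩ := h d hd
    have : (monomial d (coeff d p) : MvPolynomial (Fin 3) K)
        = monomial (d - a) (coeff d p) * monomial a 1 := by
      rw [MvPolynomial.monomial_mul, mul_one, tsub_add_cancel_of_le hle]
    rw [this]
    exact Ideal.mul_mem_left _ _ (Ideal.subset_span ⟨a, haG, rfl⟩)

lemma span_mono_mul (A B : Set (Fin 3 →₀ ℕ)) :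
    Ideal.span ((fun a => (monomial a (1 : K) : MvPolynomial (Fin 3) K)) '' A) *
      Ideal.span ((fun a => (monomial a (1 : K) : MvPolynomial (Fin 3) K)) '' B)
    = Ideal.span ((fun a => (monomial a (1 : K) : MvPolynomial (Fin 3) K)) '' (A + B)) := by
  rw [Ideal.span_mul_span']
  congr 1
  ext x
  constructor
  · rintro ⟨-, ⟨a, haA, rfl⟩, -, ⟨b, hbB, rfl⟩, rfl⟩
    exact ⟨a + b, ⟨a, haA, b, hbB, rfl⟩, by simp [MvPolynomial.monomial_mul]⟩
  · rintro ⟨-, ⟨a, haA, b, hbB, rfl⟩, rfl⟩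
    exact ⟨_, ⟨a, haA, rfl⟩, _, ⟨b, hbB, rfl⟩, by simp [MvPolynomial.monomial_mul]⟩


def G1 : Set (Fin 3 →₀ ℕ) := {E 1 0 0, E 0 1 0}
def G2 : Set (Fin 3 →₀ ℕ) := {E 1 0 0, E 0 0 1}
def G3 : Set (Fin 3 →₀ ℕ) := {E 0 4 0, E 0 3 1, E 0 2 2, E 0 1 3, E 0 0 4}
def GJ : Set (Fin 3 →₀ ℕ) := {E 1 4 0, E 0 3 1, E 0 2 2, E 0 1 3, E 1 0 4}

def A1 (s : ℕ) : Set (Fin 3 →₀ ℕ) := {d | d 0 + d 1 = s ∧ d 2 = 0}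
def A2 (s : ℕ) : Set (Fin 3 →₀ ℕ) := {d | d 0 + d 2 = s ∧ d 1 = 0}
def B3 (s : ℕ) : Set (Fin 3 →₀ ℕ) := {d | d 0 = 0 ∧ d 1 + d 2 = 4 * s}
def CJ (s : ℕ) : Set (Fin 3 →₀ ℕ) := {d | ∃ u v m p q : ℕ, u + v + m = s ∧ m ≤ p ∧
  p ≤ 3 * m ∧ p + q = 4 * m ∧ d = E (u + v) (4 * u + p) (4 * v + q)}

lemma E_congr {a b c a' b' c' : ℕ} (h1 : a = a') (h2 : b = b') (h3 : c = c') :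
    E a b c = E a' b' c' := by subst h1; subst h2; subst h3; rfl

lemma sub_mem_E {d : Fin 3 →₀ ℕ} {a b c : ℕ} (h : E a b c ≤ d) :
    E a b c + E (d 0 - a) (d 1 - b) (d 2 - c) = d := by
  rw [E_le_iff] at h
  rw [E_add]
  conv_rhs => rw [eq_E d]
  exact E_congr (by omega) (by omega) (by omega)

lemma add_A1 (s : ℕ) : G1 + A1 s = A1 (s + 1) := by
  ext d
  constructor
  · rintro ⟨g, hg, a, ⟨ha1, ha2⟩, rfl⟩
    rcases hg with rfl | rfl <;>
      exact ⟨by simp [Finsupp.add_apply]; omega, by simp [Finsupp.add_apply, ha2]⟩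
  · rintro ⟨h1, h2⟩
    by_cases h0 : 1 ≤ d 0
    · refine ⟨E 1 0 0, Or.inl rfl, E (d 0 - 1) (d 1 - 0) (d 2 - 0), ⟨by simp; omega, by simp; omega⟩,
        sub_mem_E (E_le_iff.2 ⟨h0, by omega, by omega⟩)⟩
    · refine ⟨E 0 1 0, Or.inr rfl, E (d 0 - 0) (d 1 - 1) (d 2 - 0), ⟨by simp; omega, by simp; omega⟩,
        sub_mem_E (E_le_iff.2 ⟨by omega, by omega, by omega⟩)⟩

lemma add_A2 (s : ℕ) : G2 + A2 s = A2 (s + 1) := by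
  ext d
  constructor
  · rintro ⟨g, hg, a, ⟨ha1, ha2⟩, rfl⟩
    rcases hg with rfl | rfl <;>
      exact ⟨by simp [Finsupp.add_apply]; omega, by simp [Finsupp.add_apply, ha2]⟩
  · rintro ⟨h1, h2⟩
    by_cases h0 : 1 ≤ d 0
    · refine ⟨E 1 0 0, Or.inl rfl, E (d 0 - 1) (d 1 - 0) (d 2 - 0), ⟨by simp; omega, by simp; omega⟩,
        sub_mem_E (E_le_iff.2 ⟨h0, by omega, by omega⟩)⟩
    · refine ⟨E 0 0 1, Or.inr rfl, E (d 0 - 0) (d 1 - 0) (d 2 - 1), ⟨by simp; omega, by simp; omega⟩,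
        sub_mem_E (E_le_iff.2 ⟨by omega, by omega, by omega⟩)⟩

lemma add_B3 (s : ℕ) : G3 + B3 s = B3 (s + 1) := by
  ext d
  constructor
  · rintro ⟨g, hg, a, ⟨ha1, ha2⟩, rfl⟩
    rcases hg with rfl | rfl | rfl | rfl | rfl <;>
      exact ⟨by simp [Finsupp.add_apply, ha1], by simp [Finsupp.add_apply]; omega⟩
  · rintro ⟨h1, h2⟩
    by_cases h4 : 4 ≤ d 1
    · refine ⟨E 0 4 0, by simp [G3], E (d 0 - 0) (d 1 - 4) (d 2 - 0), ⟨by simp; omega, by simp; omega⟩,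
        sub_mem_E (E_le_iff.2 ⟨by omega, by omega, by omega⟩)⟩
    · have ht : d 1 = 0 ∨ d 1 = 1 ∨ d 1 = 2 ∨ d 1 = 3 := by omega
      have h2' : 4 - d 1 ≤ d 2 := by omega
      refine ⟨E 0 (d 1) (4 - d 1), ?_, E (d 0 - 0) (d 1 - d 1) (d 2 - (4 - d 1)),
        ⟨by simp; omega, by simp; omega⟩,
        sub_mem_E (E_le_iff.2 ⟨by omega, by omega, by omega⟩)⟩
      rcases ht with h | h | h | h <;> rw [h] <;> norm_num [G3]

lemma add_CJ (s : ℕ) : GJ + CJ s = CJ (s + 1) := by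
  ext d
  constructor
  · rintro ⟨g, hg, a, ⟨u, v, m, p, q, h1, h2, h3, h4, rfl⟩, rfl⟩
    rcases hg with rfl | rfl | rfl | rfl | rfl
    · exact ⟨u + 1, v, m, p, q, by omega, h2, h3, h4,
        by show E _ _ _ + E _ _ _ = E _ _ _; rw [E_add]; exact E_congr (by omega) (by omega) (by omega)⟩
    · exact ⟨u, v, m + 1, p + 3, q + 1, by omega, by omega, by omega, by omega,
        by show E _ _ _ + E _ _ _ = E _ _ _; rw [E_add]; exact E_congr (by omega) (by omega) (by omega)⟩
    · exact ⟨u, v, m + 1, p + 2, q + 2, by omega, by omega, by omega, by omega,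
        by show E _ _ _ + E _ _ _ = E _ _ _; rw [E_add]; exact E_congr (by omega) (by omega) (by omega)⟩
    · exact ⟨u, v, m + 1, p + 1, q + 3, by omega, by omega, by omega, by omega,
        by show E _ _ _ + E _ _ _ = E _ _ _; rw [E_add]; exact E_congr (by omega) (by omega) (by omega)⟩
    · exact ⟨u, v + 1, m, p, q, by omega, h2, h3, h4,
        by show E _ _ _ + E _ _ _ = E _ _ _; rw [E_add]; exact E_congr (by omega) (by omega) (by omega)⟩
  · rintro ⟨u, v, m, p, q, h1, h2, h3, h4, rfl⟩
    by_cases hu : 1 ≤ u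
    · refine ⟨E 1 4 0, by simp [GJ], E (u - 1 + v) (4 * (u - 1) + p) (4 * v + q),
        ⟨u - 1, v, m, p, q, by omega, h2, h3, h4, rfl⟩, ?_⟩
      show E _ _ _ + E _ _ _ = E _ _ _; rw [E_add]; exact E_congr (by omega) (by omega) (by omega)
    · by_cases hv : 1 ≤ v
      · refine ⟨E 1 0 4, by norm_num [GJ], E (u + (v - 1)) (4 * u + p) (4 * (v - 1) + q),
          ⟨u, v - 1, m, p, q, by omega, h2, h3, h4, rfl⟩, ?_⟩
        show E _ _ _ + E _ _ _ = E _ _ _; rw [E_add]; exact E_congr (by omega) (by omega) (by omega)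
      · have hm : m = s + 1 := by omega
        have hm1 : 1 ≤ m := by omega
        set t : ℕ := if p + 3 ≤ 3 * m then 1 else p + 3 - 3 * m with ht
        have ht1 : 1 ≤ t := by rw [ht]; split <;> omega
        have ht3 : t ≤ 3 := by rw [ht]; split <;> omega
        have htp : t ≤ p := by rw [ht]; split <;> omega
        have hpt1 : m - 1 ≤ p - t := by rw [ht]; split <;> omega
        have hpt2 : p - t ≤ 3 * (m - 1) := by rw [ht]; split <;> omega
        have hqt : 4 - t ≤ q := by rw [ht]; split <;> omega
        refine ⟨E 0 t (4 - t), ?_, E 0 (p - t) (q - (4 - t)),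
          ⟨0, 0, m - 1, p - t, q - (4 - t), by omega, hpt1, hpt2, by omega, by
            exact E_congr (by omega) (by omega) (by omega)⟩, ?_⟩
        · have : t = 1 ∨ t = 2 ∨ t = 3 := by omega
          rcases this with h | h | h <;> rw [h] <;> norm_num [GJ]
        · show E _ _ _ + E _ _ _ = E _ _ _; rw [E_add]; exact E_congr (by omega) (by omega) (by omega)


lemma A1_zero : A1 0 = {0} := by
  ext d
  simp only [A1, Set.mem_setOf_eq, Set.mem_singleton_iff]
  constructor
  · rintro ⟨h1, h2⟩
    rw [eq_E d]
    have : (0 : Fin 3 →₀ ℕ) = E 0 0 0 := by rw [eq_E 0]; simp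
    rw [this]
    exact E_congr (by omega) (by omega) (by omega)
  · rintro rfl; simp

lemma A2_zero : A2 0 = {0} := by
  ext d
  simp only [A2, Set.mem_setOf_eq, Set.mem_singleton_iff]
  constructor
  · rintro ⟨h1, h2⟩
    rw [eq_E d]
    have : (0 : Fin 3 →₀ ℕ) = E 0 0 0 := by rw [eq_E 0]; simp
    rw [this]
    exact E_congr (by omega) (by omega) (by omega)
  · rintro rfl; simp

lemma B3_zero : B3 0 = {0} := by
  ext d
  simp only [B3, Set.mem_setOf_eq, Set.mem_singleton_iff]
  constructor
  · rintro ⟨h1, h2⟩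
    rw [eq_E d]
    have : (0 : Fin 3 →₀ ℕ) = E 0 0 0 := by rw [eq_E 0]; simp
    rw [this]
    exact E_congr (by omega) (by omega) (by omega)
  · rintro rfl; exact ⟨by simp, by simp⟩

lemma CJ_zero : CJ 0 = {0} := by
  ext d
  simp only [CJ, Set.mem_setOf_eq, Set.mem_singleton_iff]
  constructor
  · rintro ⟨u, v, m, p, q, h1, h2, h3, h4, rfl⟩
    have : (0 : Fin 3 →₀ ℕ) = E 0 0 0 := by rw [eq_E 0]; simp
    rw [this]
    exact E_congr (by omega) (by omega) (by omega)
  · rintro rfl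
    refine ⟨0, 0, 0, 0, 0, by omega, by omega, by omega, by omega, ?_⟩
    rw [eq_E 0]; exact E_congr (by simp) (by simp) (by simp)

lemma span_zero_set : Ideal.span ((fun a => (monomial a (1 : K) : MvPolynomial (Fin 3) K)) '' {0})
    = ⊤ := by
  rw [Set.image_singleton]
  have : (monomial (0 : Fin 3 →₀ ℕ) (1 : K) : MvPolynomial (Fin 3) K) = 1 := by
    simp
  rw [this, Ideal.span_singleton_one]

lemma span_pow_eq {G : Set (Fin 3 →₀ ℕ)} {F : ℕ → Set (Fin 3 →₀ ℕ)}
    (h0 : F 0 = {0}) (hstep : ∀ s, G + F s = F (s + 1)) (s : ℕ) :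
    (Ideal.span ((fun a => (monomial a (1 : K) : MvPolynomial (Fin 3) K)) '' G)) ^ s
      = Ideal.span ((fun a => (monomial a (1 : K) : MvPolynomial (Fin 3) K)) '' F s) := by
  induction s with
  | zero => rw [pow_zero, h0, span_zero_set]; exact Ideal.one_eq_top
  | succ n ih => rw [pow_succ', ih, span_mono_mul, hstep]

lemma ex_A1 {s : ℕ} {d : Fin 3 →₀ ℕ} : (∃ a ∈ A1 s, a ≤ d) ↔ s ≤ d 0 + d 1 := by
  constructor
  · rintro ⟨a, ⟨h1, h2⟩, hle⟩
    rw [le_iff3] at hle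
    omega
  · intro h
    by_cases h0 : s ≤ d 0
    · exact ⟨E s 0 0, ⟨by simp, by simp⟩, E_le_iff.2 ⟨h0, by omega, by omega⟩⟩
    · exact ⟨E (d 0) (s - d 0) 0, ⟨by simp; omega, by simp⟩,
        E_le_iff.2 ⟨by omega, by omega, by omega⟩⟩

lemma ex_A2 {s : ℕ} {d : Fin 3 →₀ ℕ} : (∃ a ∈ A2 s, a ≤ d) ↔ s ≤ d 0 + d 2 := by
  constructor
  · rintro ⟨a, ⟨h1, h2⟩, hle⟩
    rw [le_iff3] at hle
    omega
  · intro h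
    by_cases h0 : s ≤ d 0
    · exact ⟨E s 0 0, ⟨by simp, by simp⟩, E_le_iff.2 ⟨h0, by omega, by omega⟩⟩
    · exact ⟨E (d 0) 0 (s - d 0), ⟨by simp; omega, by simp⟩,
        E_le_iff.2 ⟨by omega, by omega, by omega⟩⟩

lemma ex_B3 {s : ℕ} {d : Fin 3 →₀ ℕ} : (∃ a ∈ B3 s, a ≤ d) ↔ 4 * s ≤ d 1 + d 2 := by
  constructor
  · rintro ⟨a, ⟨h1, h2⟩, hle⟩
    rw [le_iff3] at hle
    omega
  · intro h
    by_cases h0 : 4 * s ≤ d 1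
    · exact ⟨E 0 (4 * s) 0, ⟨by simp, by simp⟩, E_le_iff.2 ⟨by omega, h0, by omega⟩⟩
    · exact ⟨E 0 (d 1) (4 * s - d 1), ⟨by simp, by simp; omega⟩,
        E_le_iff.2 ⟨by omega, by omega, by omega⟩⟩

lemma ex_CJ {s : ℕ} {d : Fin 3 →₀ ℕ} (h1 : s ≤ d 0 + d 1) (h2 : s ≤ d 0 + d 2)
    (h3 : 4 * s ≤ d 1 + d 2) : ∃ c ∈ CJ s, c ≤ d := by
  by_cases hb : s ≤ d 1
  · by_cases hc : s ≤ d 2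
    · set p : ℕ := if 3 * s ≤ d 2 then s else 4 * s - d 2 with hp
      have c1 : s ≤ p := by rw [hp]; split <;> omega
      have c2 : p ≤ 3 * s := by rw [hp]; split <;> omega
      have c3 : p ≤ d 1 := by rw [hp]; split <;> omega
      have c4 : 4 * s - p ≤ d 2 := by rw [hp]; split <;> omega
      exact ⟨E 0 p (4 * s - p), ⟨0, 0, s, p, 4 * s - p, by omega, c1, c2, by omega,
        E_congr (by omega) (by omega) (by omega)⟩,
        E_le_iff.2 ⟨by omega, c3, c4⟩⟩
    · refine ⟨E (s - d 2) (4 * (s - d 2) + 3 * d 2) (d 2),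
        ⟨s - d 2, 0, d 2, 3 * d 2, d 2, by omega, by omega, by omega, by omega,
          E_congr (by omega) (by omega) (by omega)⟩,
        E_le_iff.2 ⟨by omega, by omega, by omega⟩⟩
  · refine ⟨E (s - d 1) (d 1) (4 * (s - d 1) + 3 * d 1),
      ⟨0, s - d 1, d 1, d 1, 3 * d 1, by omega, by omega, by omega, by omega,
        E_congr (by omega) (by omega) (by omega)⟩,
      E_le_iff.2 ⟨by omega, by omega, by omega⟩⟩


lemma key {i j k : Fin 3} (hcover : ∀ x : Fin 3, x = i ∨ x = j ∨ x = k)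
    {t : ℕ} {a b : MvPolynomial (Fin 3) K}
    (hab : ∀ d ∈ (a * b).support, t ≤ d i + d j)
    (hb : ∃ e ∈ b.support, e i = 0 ∧ e j = 0) :
    ∀ d ∈ a.support, t ≤ d i + d j := by
  classical
  by_contra hcon
  push_neg at hcon
  obtain ⟨d₀, hd₀, hd₀t⟩ := hcon
  set w : (Fin 3 →₀ ℕ) → ℕ := fun u => u i + u j with hw
  have hane : (a.support.image w).Nonempty := ⟨w d₀, Finset.mem_image_of_mem w hd₀⟩
  set α := (a.support.image w).min' hane with hα
  have hαle : α ≤ w d₀ := Finset.min'_le _ _ (Finset.mem_image_of_mem w hd₀)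
  obtain ⟨d₁, hd₁, hd₁w⟩ := Finset.mem_image.1 ((a.support.image w).min'_mem hane)
  have hαmin : ∀ u ∈ a.support, α ≤ w u := fun u hu =>
    Finset.min'_le _ _ (Finset.mem_image_of_mem w hu)
  set T := a.support.filter (fun u => u i = d₁ i ∧ u j = d₁ j) with hT
  obtain ⟨d, hdT, hdmax⟩ := Finset.exists_max_image T (fun u => u k)
    ⟨d₁, Finset.mem_filter.2 ⟨hd₁, rfl, rfl⟩⟩
  obtain ⟨hda, hdi, hdj⟩ : d ∈ a.support ∧ d i = d₁ i ∧ d j = d₁ j := by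
    have := Finset.mem_filter.1 hdT; exact ⟨this.1, this.2.1, this.2.2⟩
  obtain ⟨e₀, he₀, he₀i, he₀j⟩ := hb
  set U := b.support.filter (fun v => v i = 0 ∧ v j = 0) with hU
  obtain ⟨e, heU, hemax⟩ := Finset.exists_max_image U (fun v => v k)
    ⟨e₀, Finset.mem_filter.2 ⟨he₀, he₀i, he₀j⟩⟩
  obtain ⟨heb, hei, hej⟩ : e ∈ b.support ∧ e i = 0 ∧ e j = 0 := by
    have := Finset.mem_filter.1 heU; exact ⟨this.1, this.2.1, this.2.2⟩
  have hwd : d i + d j = α := by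
    rw [hα, ← hd₁w]
    show d i + d j = d₁ i + d₁ j
    rw [hdi, hdj]
  have hcoeff : coeff (d + e) (a * b) = coeff d a * coeff e b := by
    rw [MvPolynomial.coeff_mul]
    refine Finset.sum_eq_single_of_mem (d, e) (Finset.HasAntidiagonal.mem_antidiagonal.2 rfl) ?_
    rintro ⟨u, v⟩ hmem hne
    rw [Finset.HasAntidiagonal.mem_antidiagonal] at hmem
    by_contra hnz
    have hu : u ∈ a.support := MvPolynomial.mem_support_iff.2 (left_ne_zero_of_mul hnz)
    have hv : v ∈ b.support := MvPolynomial.mem_support_iff.2 (right_ne_zero_of_mul hnz)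
    have hcoord : ∀ x : Fin 3, u x + v x = d x + e x := by
      intro x
      have := DFunLike.congr_fun hmem x
      simpa using this
    have hsum : (u i + u j) + (v i + v j) = α := by
      have hi' := hcoord i
      have hj' := hcoord j
      omega
    have hwu : α ≤ u i + u j := hαmin u hu
    have hvi : v i = 0 := by omega
    have hvj : v j = 0 := by omega
    have hui : u i = d i := by have := hcoord i; omega
    have huj : u j = d j := by have := hcoord j; omega
    have huT : u ∈ T := Finset.mem_filter.2 ⟨hu, by rw [hui, hdi], by rw [huj, hdj]⟩
    have hvU : v ∈ U := Finset.mem_filter.2 ⟨hv, hvi, hvj⟩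
    have huk : u k ≤ d k := hdmax u huT
    have hvk : v k ≤ e k := hemax v hvU
    have hk' := hcoord k
    have hukk : u k = d k := by omega
    have hvkk : v k = e k := by omega
    apply hne
    have hu_eq : u = d := by
      ext x
      rcases hcover x with rfl | rfl | rfl
      · exact hui
      · exact huj
      · exact hukk
    have hv_eq : v = e := by
      ext x
      rcases hcover x with rfl | rfl | rfl
      · rw [hvi, hei]
      · rw [hvj, hej]
      · exact hvkk
    rw [hu_eq, hv_eq]
  have hne0 : coeff (d + e) (a * b) ≠ 0 := by
    rw [hcoeff]
    exact mul_ne_zero (MvPolynomial.mem_support_iff.1 hda) (MvPolynomial.mem_support_iff.1 heb)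
  have hmem : d + e ∈ (a * b).support := MvPolynomial.mem_support_iff.2 hne0
  have := hab _ hmem
  have h1 : (d + e) i = d i := by simp [Finsupp.add_apply, hei]
  have h2 : (d + e) j = d j := by simp [Finsupp.add_apply, hej]
  rw [h1, h2] at this
  have hle2 : α ≤ d₀ i + d₀ j := hαle
  omega


lemma ME (a b c : ℕ) : (monomial (E a b c) (1 : K) : MvPolynomial (Fin 3) K)
    = X 0 ^ a * X 1 ^ b * X 2 ^ c := by
  rw [MvPolynomial.X_pow_eq_monomial, MvPolynomial.X_pow_eq_monomial,
    MvPolynomial.X_pow_eq_monomial, MvPolynomial.monomial_mul, MvPolynomial.monomial_mul, E]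
  simp

lemma img_G1 : (fun a => (monomial a (1 : K) : MvPolynomial (Fin 3) K)) '' G1 = {X 0, X 1} := by
  rw [show (X 0 : MvPolynomial (Fin 3) K) = monomial (E 1 0 0) 1 by rw [ME]; ring,
    show (X 1 : MvPolynomial (Fin 3) K) = monomial (E 0 1 0) 1 by rw [ME]; ring,
    G1, Set.image_insert_eq, Set.image_singleton]

lemma img_G2 : (fun a => (monomial a (1 : K) : MvPolynomial (Fin 3) K)) '' G2 = {X 0, X 2} := by
  rw [show (X 0 : MvPolynomial (Fin 3) K) = monomial (E 1 0 0) 1 by rw [ME]; ring,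
    show (X 2 : MvPolynomial (Fin 3) K) = monomial (E 0 0 1) 1 by rw [ME]; ring,
    G2, Set.image_insert_eq, Set.image_singleton]

lemma img_G3 : (fun a => (monomial a (1 : K) : MvPolynomial (Fin 3) K)) '' G3
    = {X 1 ^ 4, X 1 ^ 3 * X 2, X 1 ^ 2 * X 2 ^ 2, X 1 * X 2 ^ 3, X 2 ^ 4} := by
  rw [show (X 1 ^ 4 : MvPolynomial (Fin 3) K) = monomial (E 0 4 0) 1 by rw [ME]; ring,
    show (X 1 ^ 3 * X 2 : MvPolynomial (Fin 3) K) = monomial (E 0 3 1) 1 by rw [ME]; ring,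
    show (X 1 ^ 2 * X 2 ^ 2 : MvPolynomial (Fin 3) K) = monomial (E 0 2 2) 1 by rw [ME]; ring,
    show (X 1 * X 2 ^ 3 : MvPolynomial (Fin 3) K) = monomial (E 0 1 3) 1 by rw [ME]; ring,
    show (X 2 ^ 4 : MvPolynomial (Fin 3) K) = monomial (E 0 0 4) 1 by rw [ME]; ring,
    G3, Set.image_insert_eq, Set.image_insert_eq, Set.image_insert_eq, Set.image_insert_eq,
    Set.image_singleton]

lemma img_GJ : (fun a => (monomial a (1 : K) : MvPolynomial (Fin 3) K)) '' GJ
    = {X 0 * X 1 ^ 4, X 1 ^ 3 * X 2, X 1 ^ 2 * X 2 ^ 2, X 1 * X 2 ^ 3, X 2 ^ 4 * X 0} := by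
  rw [show (X 0 * X 1 ^ 4 : MvPolynomial (Fin 3) K) = monomial (E 1 4 0) 1 by rw [ME]; ring,
    show (X 1 ^ 3 * X 2 : MvPolynomial (Fin 3) K) = monomial (E 0 3 1) 1 by rw [ME]; ring,
    show (X 1 ^ 2 * X 2 ^ 2 : MvPolynomial (Fin 3) K) = monomial (E 0 2 2) 1 by rw [ME]; ring,
    show (X 1 * X 2 ^ 3 : MvPolynomial (Fin 3) K) = monomial (E 0 1 3) 1 by rw [ME]; ring,
    show (X 2 ^ 4 * X 0 : MvPolynomial (Fin 3) K) = monomial (E 1 0 4) 1 by rw [ME]; ring,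
    GJ, Set.image_insert_eq, Set.image_insert_eq, Set.image_insert_eq, Set.image_insert_eq,
    Set.image_singleton]

lemma ex_G1 {d : Fin 3 →₀ ℕ} : (∃ a ∈ G1, a ≤ d) ↔ 1 ≤ d 0 + d 1 := by
  constructor
  · rintro ⟨a, ha, hle⟩
    rcases ha with rfl | rfl <;> (rw [E_le_iff] at hle; omega)
  · intro h
    by_cases h0 : 1 ≤ d 0
    · exact ⟨E 1 0 0, Or.inl rfl, E_le_iff.2 ⟨h0, by omega, by omega⟩⟩
    · exact ⟨E 0 1 0, Or.inr rfl, E_le_iff.2 ⟨by omega, by omega, by omega⟩⟩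

lemma ex_G2 {d : Fin 3 →₀ ℕ} : (∃ a ∈ G2, a ≤ d) ↔ 1 ≤ d 0 + d 2 := by
  constructor
  · rintro ⟨a, ha, hle⟩
    rcases ha with rfl | rfl <;> (rw [E_le_iff] at hle; omega)
  · intro h
    by_cases h0 : 1 ≤ d 0
    · exact ⟨E 1 0 0, Or.inl rfl, E_le_iff.2 ⟨h0, by omega, by omega⟩⟩
    · exact ⟨E 0 0 1, Or.inr rfl, E_le_iff.2 ⟨by omega, by omega, by omega⟩⟩

lemma ex_G3 {d : Fin 3 →₀ ℕ} : (∃ a ∈ G3, a ≤ d) ↔ 4 ≤ d 1 + d 2 := by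
  constructor
  · rintro ⟨a, ha, hle⟩
    rcases ha with rfl | rfl | rfl | rfl | rfl <;> (rw [E_le_iff] at hle; omega)
  · intro h
    by_cases h4 : 4 ≤ d 1
    · exact ⟨E 0 4 0, by simp [G3], E_le_iff.2 ⟨by omega, h4, by omega⟩⟩
    · have ht : d 1 = 0 ∨ d 1 = 1 ∨ d 1 = 2 ∨ d 1 = 3 := by omega
      refine ⟨E 0 (d 1) (4 - d 1), ?_, E_le_iff.2 ⟨by omega, by omega, by omega⟩⟩
      rcases ht with h' | h' | h' | h' <;> rw [h'] <;> norm_num [G3]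

lemma one_supp : (0 : Fin 3 →₀ ℕ) ∈ (1 : MvPolynomial (Fin 3) K).support := by
  rw [MvPolynomial.mem_support_iff]
  simp

lemma mono_mem {G : Set (Fin 3 →₀ ℕ)} {v : Fin 3 →₀ ℕ} (h : ∃ a ∈ G, a ≤ v) :
    (monomial v (1 : K) : MvPolynomial (Fin 3) K)
      ∈ Ideal.span ((fun a => (monomial a (1 : K) : MvPolynomial (Fin 3) K)) '' G) := by
  classical
  rw [mem_span_mono_iff]
  intro d hd
  rw [MvPolynomial.support_monomial, if_neg (one_ne_zero)] at hd
  rw [Finset.mem_singleton] at hd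
  subst hd
  exact h

lemma mono_not_mem {G : Set (Fin 3 →₀ ℕ)} {v : Fin 3 →₀ ℕ} (h : ∀ a ∈ G, ¬ a ≤ v) :
    (monomial v (1 : K) : MvPolynomial (Fin 3) K)
      ∉ Ideal.span ((fun a => (monomial a (1 : K) : MvPolynomial (Fin 3) K)) '' G) := by
  classical
  intro hm
  obtain ⟨a, haG, hle⟩ := mem_span_mono_iff.1 hm v (by
    rw [MvPolynomial.support_monomial, if_neg (one_ne_zero)]; exact Finset.mem_singleton_self _)
  exact h a haG hle

lemma Q1_prime :
    (Ideal.span ((fun a => (monomial a (1 : K) : MvPolynomial (Fin 3) K)) '' G1)).IsPrime := by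
  constructor
  · rw [Ideal.ne_top_iff_one]
    intro h
    obtain ⟨a, haG, hle⟩ := mem_span_mono_iff.1 h 0 one_supp
    rcases haG with rfl | rfl <;> (rw [E_le_iff] at hle; simp at hle)
  · intro x y hxy
    rw [or_iff_not_imp_right]
    intro hy
    have hy' : ∃ e ∈ y.support, e 0 = 0 ∧ e 1 = 0 := by
      by_contra hc
      push_neg at hc
      apply hy
      rw [mem_span_mono_iff]
      intro d hd
      exact ex_G1.mpr (by have := hc d hd; omega)
    rw [mem_span_mono_iff] at hxy ⊢
    intro d hd
    exact ex_G1.mpr (key (i := 0) (j := 1) (k := 2) fin3cases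
      (fun d' hd' => ex_G1.1 (hxy d' hd')) hy' d hd)

lemma Q2_prime :
    (Ideal.span ((fun a => (monomial a (1 : K) : MvPolynomial (Fin 3) K)) '' G2)).IsPrime := by
  constructor
  · rw [Ideal.ne_top_iff_one]
    intro h
    obtain ⟨a, haG, hle⟩ := mem_span_mono_iff.1 h 0 one_supp
    rcases haG with rfl | rfl <;> (rw [E_le_iff] at hle; simp at hle)
  · intro x y hxy
    rw [or_iff_not_imp_right]
    intro hy
    have hy' : ∃ e ∈ y.support, e 0 = 0 ∧ e 2 = 0 := by
      by_contra hc
      push_neg at hc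
      apply hy
      rw [mem_span_mono_iff]
      intro d hd
      exact ex_G2.mpr (by have := hc d hd; omega)
    rw [mem_span_mono_iff] at hxy ⊢
    intro d hd
    exact ex_G2.mpr (key (i := 0) (j := 2) (k := 1) (by intro x'; omega)
      (fun d' hd' => ex_G2.1 (hxy d' hd')) hy' d hd)

lemma Q3_primary :
    (Ideal.span ((fun a => (monomial a (1 : K) : MvPolynomial (Fin 3) K)) '' G3)).IsPrimary := by
  rw [Ideal.isPrimary_iff]
  constructor
  · rw [Ideal.ne_top_iff_one]
    intro h
    obtain ⟨a, haG, hle⟩ := mem_span_mono_iff.1 h 0 one_supp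
    rcases haG with rfl | rfl | rfl | rfl | rfl <;> (rw [E_le_iff] at hle; simp at hle)
  · intro x y hxy
    rw [or_iff_not_imp_left]
    intro hx
    have hy : ∀ e ∈ y.support, 1 ≤ e 1 + e 2 := by
      by_contra hc
      push_neg at hc
      obtain ⟨e, he, h0⟩ := hc
      apply hx
      rw [mem_span_mono_iff]
      intro d hd
      exact ex_G3.mpr (key (i := 1) (j := 2) (k := 0) (by intro x'; omega)
        (fun d' hd' => ex_G3.1 (mem_span_mono_iff.1 hxy d' hd'))
        ⟨e, he, by omega, by omega⟩ d hd)
    have h14 : (X 1 : MvPolynomial (Fin 3) K)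
        ∈ (Ideal.span ((fun a => (monomial a (1:K) : MvPolynomial (Fin 3) K)) '' G3)).radical := by
      refine ⟨4, ?_⟩
      rw [show (X 1 : MvPolynomial (Fin 3) K) ^ 4 = monomial (E 0 4 0) 1 by rw [ME]; ring]
      exact Ideal.subset_span ⟨E 0 4 0, by simp [G3], rfl⟩
    have h24 : (X 2 : MvPolynomial (Fin 3) K)
        ∈ (Ideal.span ((fun a => (monomial a (1:K) : MvPolynomial (Fin 3) K)) '' G3)).radical := by
      refine ⟨4, ?_⟩
      rw [show (X 2 : MvPolynomial (Fin 3) K) ^ 4 = monomial (E 0 0 4) 1 by rw [ME]; ring]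
      exact Ideal.subset_span ⟨E 0 0 4, by norm_num [G3], rfl⟩
    have hyP : y ∈ Ideal.span ((fun a => (monomial a (1 : K) : MvPolynomial (Fin 3) K))
        '' {E 0 1 0, E 0 0 1}) := by
      rw [mem_span_mono_iff]
      intro d hd
      have := hy d hd
      by_cases h1 : 1 ≤ d 1
      · exact ⟨E 0 1 0, Or.inl rfl, E_le_iff.2 ⟨by omega, h1, by omega⟩⟩
      · exact ⟨E 0 0 1, Or.inr rfl, E_le_iff.2 ⟨by omega, by omega, by omega⟩⟩
    refine Ideal.span_le.2 ?_ hyP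
    rintro z ⟨a, ha, rfl⟩
    rcases ha with rfl | rfl
    · show (monomial (E 0 1 0) (1:K) : MvPolynomial (Fin 3) K) ∈ _
      rw [show (monomial (E 0 1 0) (1:K) : MvPolynomial (Fin 3) K) = X 1 by rw [ME]; ring]
      exact h14
    · show (monomial (E 0 0 1) (1:K) : MvPolynomial (Fin 3) K) ∈ _
      rw [show (monomial (E 0 0 1) (1:K) : MvPolynomial (Fin 3) K) = X 2 by rw [ME]; ring]
      exact h24

lemma inter_pow (s : ℕ) :
    Ideal.span ((fun a => (monomial a (1 : K) : MvPolynomial (Fin 3) K)) '' A1 s)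
      ⊓ Ideal.span ((fun a => (monomial a (1 : K) : MvPolynomial (Fin 3) K)) '' A2 s)
      ⊓ Ideal.span ((fun a => (monomial a (1 : K) : MvPolynomial (Fin 3) K)) '' B3 s)
    = Ideal.span ((fun a => (monomial a (1 : K) : MvPolynomial (Fin 3) K)) '' CJ s) := by
  apply le_antisymm
  · intro p hp
    rw [Submodule.mem_inf, Submodule.mem_inf] at hp
    obtain ⟨⟨h1, h2⟩, h3⟩ := hp
    rw [mem_span_mono_iff] at h1 h2 h3 ⊢
    intro d hd
    exact ex_CJ (ex_A1.1 (h1 d hd)) (ex_A2.1 (h2 d hd)) (ex_B3.1 (h3 d hd))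
  · refine le_inf (le_inf ?_ ?_) ?_ <;>
      (rw [Ideal.span_le]; rintro z ⟨c, ⟨u, v, m, p, q, h1, h2, h3, h4, rfl⟩, rfl⟩)
    · exact mono_mem (ex_A1.mpr (by simp; omega))
    · exact mono_mem (ex_A2.mpr (by simp; omega))
    · exact mono_mem (ex_B3.mpr (by simp; omega))

lemma main_pow (s : ℕ) :
    (Ideal.span ((fun a => (monomial a (1 : K) : MvPolynomial (Fin 3) K)) '' G1)) ^ s
      ⊓ (Ideal.span ((fun a => (monomial a (1 : K) : MvPolynomial (Fin 3) K)) '' G2)) ^ s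
      ⊓ (Ideal.span ((fun a => (monomial a (1 : K) : MvPolynomial (Fin 3) K)) '' G3)) ^ s
    = (Ideal.span ((fun a => (monomial a (1 : K) : MvPolynomial (Fin 3) K)) '' GJ)) ^ s := by
  rw [span_pow_eq A1_zero add_A1, span_pow_eq A2_zero add_A2, span_pow_eq B3_zero add_B3,
    span_pow_eq CJ_zero add_CJ]
  exact inter_pow s


end S12

open S12

theorem stmt12 {K : Type*} [Field K]
    (J Q1 Q2 Q3 : Ideal (MvPolynomial (Fin 3) K))
    (hJ : J = Ideal.span {X 0 * X 1 ^ 4, X 1 ^ 3 * X 2, X 1 ^ 2 * X 2 ^ 2,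
      X 1 * X 2 ^ 3, X 2 ^ 4 * X 0})
    (hQ1 : Q1 = Ideal.span {X 0, X 1})
    (hQ2 : Q2 = Ideal.span {X 0, X 2})
    (hQ3 : Q3 = Ideal.span {X 1 ^ 4, X 1 ^ 3 * X 2, X 1 ^ 2 * X 2 ^ 2,
      X 1 * X 2 ^ 3, X 2 ^ 4}) :
    J = Q1 ⊓ Q2 ⊓ Q3 ∧
    Q1.IsPrimary ∧ Q2.IsPrimary ∧ Q3.IsPrimary ∧
    Q1.radical ≠ Q2.radical ∧ Q1.radical ≠ Q3.radical ∧ Q2.radical ≠ Q3.radical ∧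
    Q1 ⊓ Q2 ≠ J ∧ Q1 ⊓ Q3 ≠ J ∧ Q2 ⊓ Q3 ≠ J ∧
    (∀ s : ℕ, 1 ≤ s → Q1 ^ s ⊓ Q2 ^ s ⊓ Q3 ^ s = J ^ s) := by
  subst hJ; subst hQ1; subst hQ2; subst hQ3
  rw [← img_G1, ← img_G2, ← img_G3, ← img_GJ]
  refine ⟨?_, Q1_prime.isPrimary, Q2_prime.isPrimary, Q3_primary, ?_, ?_, ?_, ?_, ?_, ?_,
    fun s _ => main_pow s⟩
  · simpa [pow_one] using (main_pow (K := K) 1).symm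
  · rw [Q1_prime.radical, Q2_prime.radical]
    intro h
    have hx : (monomial (E 0 1 0) (1 : K) : MvPolynomial (Fin 3) K)
        ∈ Ideal.span ((fun a => (monomial a (1 : K) : MvPolynomial (Fin 3) K)) '' G1) :=
      mono_mem ⟨E 0 1 0, Or.inr rfl, le_rfl⟩
    rw [h] at hx
    exact mono_not_mem
      (by rintro a (rfl | rfl) hle <;> (rw [E_le_iff] at hle; simp at hle)) hx
  · rw [Q1_prime.radical]
    intro h
    have hx : (monomial (E 1 0 0) (1 : K) : MvPolynomial (Fin 3) K)
        ∈ Ideal.span ((fun a => (monomial a (1 : K) : MvPolynomial (Fin 3) K)) '' G1) :=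
      mono_mem ⟨E 1 0 0, Or.inl rfl, le_rfl⟩
    rw [h] at hx
    obtain ⟨n, hn⟩ := hx
    have hpow : (monomial (E 1 0 0) (1 : K) : MvPolynomial (Fin 3) K) ^ n
        = monomial (E n 0 0) 1 := by
      have hsm : n • (E 1 0 0 : Fin 3 →₀ ℕ) = E n 0 0 := by
        ext i
        rcases fin3cases i with h' | h' | h' <;> subst h' <;>
          simp [Finsupp.smul_apply]
      rw [MvPolynomial.monomial_pow, one_pow, hsm]
    rw [hpow] at hn
    exact mono_not_mem
      (by rintro a (rfl | rfl | rfl | rfl | rfl) hle <;> (rw [E_le_iff] at hle; simp at hle)) hn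
  · rw [Q2_prime.radical]
    intro h
    have hx : (monomial (E 1 0 0) (1 : K) : MvPolynomial (Fin 3) K)
        ∈ Ideal.span ((fun a => (monomial a (1 : K) : MvPolynomial (Fin 3) K)) '' G2) :=
      mono_mem ⟨E 1 0 0, Or.inl rfl, le_rfl⟩
    rw [h] at hx
    obtain ⟨n, hn⟩ := hx
    have hpow : (monomial (E 1 0 0) (1 : K) : MvPolynomial (Fin 3) K) ^ n
        = monomial (E n 0 0) 1 := by
      have hsm : n • (E 1 0 0 : Fin 3 →₀ ℕ) = E n 0 0 := by
        ext i
        rcases fin3cases i with h' | h' | h' <;> subst h' <;>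
          simp [Finsupp.smul_apply]
      rw [MvPolynomial.monomial_pow, one_pow, hsm]
    rw [hpow] at hn
    exact mono_not_mem
      (by rintro a (rfl | rfl | rfl | rfl | rfl) hle <;> (rw [E_le_iff] at hle; simp at hle)) hn
  · intro h
    have hx : (monomial (E 1 0 0) (1 : K) : MvPolynomial (Fin 3) K)
        ∈ Ideal.span ((fun a => (monomial a (1 : K) : MvPolynomial (Fin 3) K)) '' G1)
          ⊓ Ideal.span ((fun a => (monomial a (1 : K) : MvPolynomial (Fin 3) K)) '' G2) :=
      Submodule.mem_inf.2 ⟨mono_mem ⟨E 1 0 0, Or.inl rfl, le_rfl⟩,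
        mono_mem ⟨E 1 0 0, Or.inl rfl, le_rfl⟩⟩
    rw [h] at hx
    exact mono_not_mem
      (by rintro a (rfl | rfl | rfl | rfl | rfl) hle <;> (rw [E_le_iff] at hle; simp at hle)) hx
  · intro h
    have hx : (monomial (E 0 4 0) (1 : K) : MvPolynomial (Fin 3) K)
        ∈ Ideal.span ((fun a => (monomial a (1 : K) : MvPolynomial (Fin 3) K)) '' G1)
          ⊓ Ideal.span ((fun a => (monomial a (1 : K) : MvPolynomial (Fin 3) K)) '' G3) :=
      Submodule.mem_inf.2 ⟨mono_mem ⟨E 0 1 0, Or.inr rfl, E_le_iff.2 (by simp)⟩,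
        mono_mem ⟨E 0 4 0, Or.inl rfl, le_rfl⟩⟩
    rw [h] at hx
    exact mono_not_mem
      (by rintro a (rfl | rfl | rfl | rfl | rfl) hle <;> (rw [E_le_iff] at hle; simp at hle)) hx
  · intro h
    have hx : (monomial (E 0 0 4) (1 : K) : MvPolynomial (Fin 3) K)
        ∈ Ideal.span ((fun a => (monomial a (1 : K) : MvPolynomial (Fin 3) K)) '' G2)
          ⊓ Ideal.span ((fun a => (monomial a (1 : K) : MvPolynomial (Fin 3) K)) '' G3) :=
      Submodule.mem_inf.2 ⟨mono_mem ⟨E 0 0 1, Or.inr rfl, E_le_iff.2 (by simp)⟩,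
        mono_mem ⟨E 0 0 4, by norm_num [G3], le_rfl⟩⟩
    rw [h] at hx
    exact mono_not_mem
      (by rintro a (rfl | rfl | rfl | rfl | rfl) hle <;> (rw [E_le_iff] at hle; simp at hle)) hx
end
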